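/- arXiv:0809.0665 — 4 statements merged into one kernel-verified Lean document; each statement's English description precedes it below -/
import Mathlib

section
/- Let d ≥ 1 and let a, b be real numbers with 0 < a < d, 0 < b < d and a + b = d. Then there exists a constant C > 0 such that for all y ∈ ℝ^d with 0 < |y| ≤ 1, ∫_{|x| ≤ 1} |x - y|^{-a} |x|^{-b} dx ≤ C (1 + log(1/|y|)). -/
open Set Function Metric MeasureTheory intervalIntegral Real
open scoped ENNReal NNReal

local notation "dim" => Module.finrank ℝ

section helpers
variable {E : Type*} [NormedAddCommGroup E] [NormedSpace ℝ E]
  [MeasurableSpace E] [Nontrivial E] (μ : Measure E) [FiniteDimensional ℝ E] [BorelSpace E]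
  [μ.IsAddHaarMeasure]

lemma lintegral_fun_norm_addHaar' (f : ℝ → ℝ≥0∞) (hf : Measurable f) :
    ∫⁻ x, f ‖x‖ ∂μ
      = (dim E) * μ (ball 0 1) * ∫⁻ y in Ioi (0 : ℝ), ENNReal.ofReal (y ^ (dim E - 1)) * f y := by
  calc
    ∫⁻ x, f ‖x‖ ∂μ = ∫⁻ x : ({(0)}ᶜ : Set E), f ‖x.1‖ ∂(μ.comap (↑)) := by
      rw [lintegral_subtype_comap (measurableSet_singleton _).compl fun x ↦ f ‖x‖,
        MeasureTheory.restrict_compl_singleton]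
    _ = ∫⁻ x : sphere (0 : E) 1 × Ioi (0 : ℝ), f x.2
          ∂μ.toSphere.prod (.volumeIoiPow (dim E - 1)) := by
      rw [← μ.measurePreserving_homeomorphUnitSphereProd.lintegral_comp_emb
        (Homeomorph.measurableEmbedding _) (fun x => f x.2)]
      simp
    _ = μ.toSphere univ * ∫⁻ x : Ioi (0 : ℝ), f x ∂(Measure.volumeIoiPow (dim E - 1)) := by
      rw [← lintegral_map (f := fun r : Ioi (0:ℝ) => f r.1) (g := Prod.snd) (by fun_prop)
        measurable_snd, Measure.map_snd_prod,
        lintegral_smul_measure, smul_eq_mul]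
    _ = _ := by
      rw [μ.toSphere_apply_univ, Measure.volumeIoiPow,
        lintegral_withDensity_eq_lintegral_mul _ (g := fun x : Ioi (0:ℝ) => f x.1)
          (by fun_prop) (by fun_prop)]
      congr 1
      simp only [Pi.mul_apply]
      exact lintegral_subtype_comap measurableSet_Ioi
        (fun y => ENNReal.ofReal (y ^ (dim E - 1)) * f y)

lemma lintegral_rpow_norm_closedBall (p r : ℝ) (hr : 0 < r) (hp : -(dim E : ℝ) < p) :
    ∫⁻ x in closedBall (0 : E) r, ENNReal.ofReal (‖x‖ ^ p) ∂μ
      = (dim E) * μ (ball 0 1)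
          * ENNReal.ofReal (r ^ ((dim E : ℝ) + p) / ((dim E : ℝ) + p)) := by
  have hn : 0 < dim E := Module.finrank_pos
  have hcast : ((dim E - 1 : ℕ) : ℝ) = (dim E : ℝ) - 1 := by
    rw [Nat.cast_sub hn]; norm_num
  have hq : (-1 : ℝ) < (dim E : ℝ) - 1 + p := by linarith
  have hmeas : Measurable (Set.indicator (Iic r) (fun t : ℝ => ENNReal.ofReal (t ^ p))) :=
    Measurable.indicator (by fun_prop) measurableSet_Iic
  have h1 : ∫⁻ x in closedBall (0 : E) r, ENNReal.ofReal (‖x‖ ^ p) ∂μ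
      = ∫⁻ x, Set.indicator (Iic r) (fun t : ℝ => ENNReal.ofReal (t ^ p)) ‖x‖ ∂μ := by
    rw [← lintegral_indicator measurableSet_closedBall]
    congr 1; ext x
    by_cases h : ‖x‖ ≤ r <;> simp [Set.indicator_apply, mem_closedBall_zero_iff, h]
  rw [h1, lintegral_fun_norm_addHaar' μ _ hmeas]
  congr 1
  calc ∫⁻ y in Ioi (0:ℝ), ENNReal.ofReal (y ^ (dim E - 1))
        * Set.indicator (Iic r) (fun t : ℝ => ENNReal.ofReal (t ^ p)) y
      = ∫⁻ y in Ioi (0:ℝ), Set.indicator (Iic r)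
          (fun y => ENNReal.ofReal (y ^ (dim E - 1)) * ENNReal.ofReal (y ^ p)) y := by
        congr 1; ext y
        simp only [Set.indicator_apply, mul_ite, mul_zero]
    _ = ∫⁻ y in Iic r, ENNReal.ofReal (y ^ (dim E - 1)) * ENNReal.ofReal (y ^ p)
          ∂(volume.restrict (Ioi 0)) := lintegral_indicator measurableSet_Iic _
    _ = ∫⁻ y in Ioc (0:ℝ) r, ENNReal.ofReal (y ^ (dim E - 1)) * ENNReal.ofReal (y ^ p) := by
        rw [Measure.restrict_restrict measurableSet_Iic, inter_comm, Ioi_inter_Iic]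
    _ = ∫⁻ y in Ioc (0:ℝ) r, ENNReal.ofReal (y ^ ((dim E : ℝ) - 1 + p)) := by
        refine setLIntegral_congr_fun measurableSet_Ioc (fun y hy => ?_)
        rw [← ENNReal.ofReal_mul (pow_nonneg hy.1.le _), ← Real.rpow_natCast y (dim E - 1), hcast,
          ← Real.rpow_add hy.1]
    _ = ENNReal.ofReal (r ^ ((dim E : ℝ) + p) / ((dim E : ℝ) + p)) := by
        rw [← ofReal_integral_eq_lintegral_ofReal]
        · congr 1
          rw [← intervalIntegral.integral_of_le hr.le, integral_rpow (Or.inl hq),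
            Real.zero_rpow (by linarith), sub_zero]
          ring_nf
        · exact (intervalIntegrable_iff_integrableOn_Ioc_of_le hr.le).mp
            (intervalIntegrable_rpow' hq)
        · filter_upwards [ae_restrict_mem measurableSet_Ioc] with y hy
          exact Real.rpow_nonneg hy.1.le _

lemma lintegral_rpow_norm_annulus (r : ℝ) (hr : 0 < r) (hr1 : r ≤ 1) :
    ∫⁻ x in closedBall (0 : E) 1 \ ball 0 r, ENNReal.ofReal (‖x‖ ^ (-(dim E : ℝ))) ∂μ
      = (dim E) * μ (ball 0 1) * ENNReal.ofReal (Real.log (1 / r)) := by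
  have hn : 0 < dim E := Module.finrank_pos
  have hcast : ((dim E - 1 : ℕ) : ℝ) = (dim E : ℝ) - 1 := by
    rw [Nat.cast_sub hn]; norm_num
  have hmeas : Measurable (Set.indicator (Icc r 1)
      (fun t : ℝ => ENNReal.ofReal (t ^ (-(dim E : ℝ))))) :=
    Measurable.indicator (by fun_prop) measurableSet_Icc
  have h1 : ∫⁻ x in closedBall (0 : E) 1 \ ball 0 r, ENNReal.ofReal (‖x‖ ^ (-(dim E : ℝ))) ∂μ
      = ∫⁻ x, Set.indicator (Icc r 1)
          (fun t : ℝ => ENNReal.ofReal (t ^ (-(dim E : ℝ)))) ‖x‖ ∂μ := by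
    rw [← lintegral_indicator (measurableSet_closedBall.diff measurableSet_ball)]
    congr 1; ext x
    by_cases h : r ≤ ‖x‖ ∧ ‖x‖ ≤ 1
    · rw [Set.indicator_of_mem (Set.mem_diff_of_mem (mem_closedBall_zero_iff.2 h.2)
        (fun hc => absurd (mem_ball_zero_iff.1 hc) (not_lt.2 h.1))),
        Set.indicator_of_mem (mem_Icc.2 h)]
    · rw [Set.indicator_of_notMem (fun hc => h ⟨not_lt.1
          (fun hlt => hc.2 (mem_ball_zero_iff.2 hlt)), mem_closedBall_zero_iff.1 hc.1⟩),
        Set.indicator_of_notMem (fun hc => h (mem_Icc.1 hc))]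
  rw [h1, lintegral_fun_norm_addHaar' μ _ hmeas]
  congr 1
  calc ∫⁻ y in Ioi (0:ℝ), ENNReal.ofReal (y ^ (dim E - 1))
        * Set.indicator (Icc r 1) (fun t : ℝ => ENNReal.ofReal (t ^ (-(dim E : ℝ)))) y
      = ∫⁻ y in Ioi (0:ℝ), Set.indicator (Icc r 1)
          (fun y => ENNReal.ofReal (y ^ (dim E - 1))
            * ENNReal.ofReal (y ^ (-(dim E : ℝ)))) y := by
        congr 1; ext y
        simp only [Set.indicator_apply, mul_ite, mul_zero]
    _ = ∫⁻ y in Icc r 1, ENNReal.ofReal (y ^ (dim E - 1)) * ENNReal.ofReal (y ^ (-(dim E : ℝ)))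
          ∂(volume.restrict (Ioi 0)) := lintegral_indicator measurableSet_Icc _
    _ = ∫⁻ y in Icc r 1, ENNReal.ofReal (y ^ (dim E - 1))
          * ENNReal.ofReal (y ^ (-(dim E : ℝ))) := by
        rw [Measure.restrict_restrict measurableSet_Icc,
          show Icc r 1 ∩ Ioi (0:ℝ) = Icc r 1 from
            inter_eq_self_of_subset_left fun y hy => lt_of_lt_of_le hr hy.1]
    _ = ∫⁻ y in Icc r 1, ENNReal.ofReal y⁻¹ := by
        refine setLIntegral_congr_fun measurableSet_Icc (fun y hy => ?_)
        have hy0 : 0 < y := lt_of_lt_of_le hr hy.1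
        rw [← ENNReal.ofReal_mul (pow_nonneg hy0.le _), ← Real.rpow_natCast y (dim E - 1), hcast,
          ← Real.rpow_add hy0]
        have h5 : (dim E : ℝ) - 1 + -(dim E : ℝ) = -1 := by ring
        rw [h5, Real.rpow_neg_one]
    _ = ENNReal.ofReal (Real.log (1 / r)) := by
        rw [← ofReal_integral_eq_lintegral_ofReal]
        · rw [MeasureTheory.integral_Icc_eq_integral_Ioc,
            ← intervalIntegral.integral_of_le hr1, integral_inv]
          simp only [Set.mem_uIcc]
          rintro (⟨h1, -⟩ | ⟨h2, -⟩) <;> linarith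
        · exact (continuousOn_inv₀.mono fun y hy =>
            ne_of_gt (lt_of_lt_of_le hr hy.1)).integrableOn_compact isCompact_Icc
        · filter_upwards [ae_restrict_mem measurableSet_Icc] with y hy
          exact inv_nonneg.mpr (le_trans hr.le hy.1)

lemma lintegral_translate (y : E) (ρ : ℝ) (F : E → ℝ≥0∞) :
    ∫⁻ x in closedBall y ρ, F (x - y) ∂μ = ∫⁻ x in closedBall 0 ρ, F x ∂μ := by
  rw [← lintegral_indicator measurableSet_closedBall, ← lintegral_indicator
    measurableSet_closedBall]
  have h : ∀ x : E, (closedBall y ρ).indicator (fun x => F (x - y)) x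
      = (closedBall 0 ρ).indicator F (x - y) := by
    intro x
    by_cases h : ‖x - y‖ ≤ ρ
    · rw [Set.indicator_of_mem (mem_closedBall_iff_norm.2 h),
        Set.indicator_of_mem (mem_closedBall_zero_iff.2 h)]
    · rw [Set.indicator_of_notMem (fun hc => h (mem_closedBall_iff_norm.1 hc)),
        Set.indicator_of_notMem (fun hc => h (mem_closedBall_zero_iff.1 hc))]
  simp_rw [h]
  exact lintegral_sub_right_eq_self (fun x => (closedBall (0:E) ρ).indicator F x) y

end helpers

theorem stmt1 (d : ℕ) (hd : 1 ≤ d) (a b : ℝ) (ha : 0 < a) (had : a < d)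
    (hb : 0 < b) (hbd : b < d) (hab : a + b = (d : ℝ)) :
    ∃ C > 0, ∀ y : EuclideanSpace ℝ (Fin d), y ≠ 0 → ‖y‖ ≤ 1 →
      (∫ x in Metric.closedBall (0 : EuclideanSpace ℝ (Fin d)) 1,
          ‖x - y‖ ^ (-a) * ‖x‖ ^ (-b))
        ≤ C * (1 + Real.log (1 / ‖y‖)) := by
  classical
  haveI : Nonempty (Fin d) := Fin.pos_iff_nonempty.mp hd
  set E := EuclideanSpace ℝ (Fin d) with hE
  have hdim : dim E = d := finrank_euclideanSpace_fin
  haveI : Nontrivial E := Module.nontrivial_of_finrank_pos (R := ℝ) (by rw [hdim]; exact hd)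
  set V : ℝ≥0∞ := volume (ball (0 : E) 1) with hV
  have hV0 : V ≠ 0 := (measure_ball_pos _ _ one_pos).ne'
  have hVtop : V ≠ ⊤ := measure_ball_lt_top.ne
  set vB : ℝ := (d : ℝ) * V.toReal with hvB
  have hd0 : (0:ℝ) < d := by exact_mod_cast hd
  have hvB0 : 0 < vB := mul_pos hd0 (ENNReal.toReal_pos hV0 hVtop)
  have hS0 : 0 < 1/b + 4^a/a + 2^a := by positivity
  refine ⟨vB * (1/b + 4^a/a + 2^a) + 1, by positivity, ?_⟩
  intro y hy0 hy1
  set n := ‖y‖ with hn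
  have hn0 : 0 < n := norm_pos_iff.2 hy0
  have hn2 : 0 < n/2 := by linarith
  have hlog0 : 0 ≤ Real.log (1/n) := Real.log_nonneg ((one_le_div hn0).2 hy1)
  have hma : Measurable fun x : E => ENNReal.ofReal (‖x - y‖ ^ (-a)) := by fun_prop
  have hmb : Measurable fun x : E => ENNReal.ofReal (‖x‖ ^ (-b)) := by fun_prop
  have hmd : Measurable fun x : E => ENNReal.ofReal (‖x‖ ^ (-(d:ℝ))) := by fun_prop
  set B := closedBall (0:E) 1 with hB
  set F : E → ℝ≥0∞ := fun x => ENNReal.ofReal (‖x - y‖ ^ (-a) * ‖x‖ ^ (-b)) with hF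
  set G1 : E → ℝ≥0∞ := (closedBall y (n/2)).indicator
    (fun x => ENNReal.ofReal ((n/2) ^ (-b)) * ENNReal.ofReal (‖x - y‖ ^ (-a))) with hG1
  set G2 : E → ℝ≥0∞ := (closedBall (0:E) (2*n)).indicator
    (fun x => ENNReal.ofReal ((n/2) ^ (-a)) * ENNReal.ofReal (‖x‖ ^ (-b))) with hG2
  set G3 : E → ℝ≥0∞ := (B \ ball (0:E) n).indicator
    (fun x => ENNReal.ofReal ((2:ℝ) ^ a) * ENNReal.ofReal (‖x‖ ^ (-(d:ℝ)))) with hG3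
  have hmG1 : Measurable G1 := (measurable_const.mul hma).indicator measurableSet_closedBall
  have hmG2 : Measurable G2 := (measurable_const.mul hmb).indicator measurableSet_closedBall
  have hmG3 : Measurable G3 := (measurable_const.mul hmd).indicator
    (measurableSet_closedBall.diff measurableSet_ball)
  -- pointwise bound
  have key : ∀ x ∈ B, F x ≤ G1 x + G2 x + G3 x := by
    intro x hx
    have hxn : ‖x‖ ≤ 1 := mem_closedBall_zero_iff.1 hx
    by_cases h1 : ‖x - y‖ ≤ n/2
    · have htri : n ≤ ‖x - y‖ + ‖x‖ := by
        have h := norm_add_le (y - x) x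
        rw [sub_add_cancel] at h
        calc n = ‖y‖ := rfl
          _ ≤ ‖y - x‖ + ‖x‖ := h
          _ = ‖x - y‖ + ‖x‖ := by rw [norm_sub_rev]
      have hx2 : n/2 ≤ ‖x‖ := by linarith
      have hb1 : ‖x‖ ^ (-b) ≤ (n/2) ^ (-b) :=
        Real.rpow_le_rpow_of_nonpos hn2 hx2 (by linarith)
      have hFG : F x ≤ G1 x := by
        rw [hG1, Set.indicator_of_mem (mem_closedBall_iff_norm.2 h1),
          ← ENNReal.ofReal_mul (by positivity)]
        apply ENNReal.ofReal_le_ofReal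
        rw [mul_comm ((n/2) ^ (-b)) _]
        exact mul_le_mul_of_nonneg_left hb1 (Real.rpow_nonneg (norm_nonneg _) _)
      exact hFG.trans ((self_le_add_right _ _).trans (self_le_add_right _ _))
    · push_neg at h1
      by_cases h2 : ‖x‖ ≤ 2*n
      · have ha1 : ‖x - y‖ ^ (-a) ≤ (n/2) ^ (-a) :=
          Real.rpow_le_rpow_of_nonpos hn2 h1.le (by linarith)
        have hFG : F x ≤ G2 x := by
          rw [hG2, Set.indicator_of_mem (mem_closedBall_zero_iff.2 h2),
            ← ENNReal.ofReal_mul (by positivity)]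
          apply ENNReal.ofReal_le_ofReal
          exact mul_le_mul_of_nonneg_right ha1 (Real.rpow_nonneg (norm_nonneg _) _)
        exact hFG.trans ((le_add_self).trans (self_le_add_right _ _))
      · push_neg at h2
        have hx0 : (0:ℝ) < ‖x‖ := lt_trans (by positivity) h2
        have hxy : ‖x‖/2 ≤ ‖x - y‖ := by
          have h := norm_add_le (x - y) y
          rw [sub_add_cancel] at h
          linarith
        have ha1 : ‖x - y‖ ^ (-a) ≤ (‖x‖/2) ^ (-a) :=
          Real.rpow_le_rpow_of_nonpos (by positivity) hxy (by linarith)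
        have hsplit : (‖x‖/2) ^ (-a) = 2^a * ‖x‖^(-a) := by
          rw [Real.div_rpow (norm_nonneg _) (by norm_num : (0:ℝ) ≤ 2), div_eq_mul_inv,
            ← Real.rpow_neg (by norm_num : (0:ℝ) ≤ 2), neg_neg, mul_comm]
        have hmem : x ∈ B \ ball (0:E) n :=
          ⟨hx, fun hc => absurd (mem_ball_zero_iff.1 hc) (by push_neg; linarith)⟩
        have hFG : F x ≤ G3 x := by
          rw [hG3, Set.indicator_of_mem hmem, ← ENNReal.ofReal_mul (by positivity)]
          apply ENNReal.ofReal_le_ofReal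
          have hnab : -a + -b = -(d:ℝ) := by rw [← hab]; ring
          calc ‖x - y‖^(-a) * ‖x‖^(-b) ≤ (2^a * ‖x‖^(-a)) * ‖x‖^(-b) := by
                rw [← hsplit]
                exact mul_le_mul_of_nonneg_right ha1 (Real.rpow_nonneg (norm_nonneg _) _)
            _ = 2^a * ‖x‖^(-(d:ℝ)) := by rw [mul_assoc, ← Real.rpow_add hx0, hnab]
        exact hFG.trans le_add_self
  -- from integral to lintegral
  have hIL : ∫ x in B, ‖x - y‖ ^ (-a) * ‖x‖ ^ (-b) = (∫⁻ x in B, F x).toReal := by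
    rw [integral_eq_lintegral_of_nonneg_ae (ae_of_all _ fun x =>
      mul_nonneg (Real.rpow_nonneg (norm_nonneg _) _) (Real.rpow_nonneg (norm_nonneg _) _))
      ((Measurable.mul (by fun_prop) (by fun_prop)).aestronglyMeasurable)]
  rw [hIL]
  -- bound the lintegral
  have hdV : (d : ℝ≥0∞) * V = ENNReal.ofReal vB := by
    rw [hvB, ENNReal.ofReal_mul (by positivity), ENNReal.ofReal_toReal hVtop,
      ENNReal.ofReal_natCast]
  have hdb : (d:ℝ) + -a = b := by linarith
  have hda : (d:ℝ) + -b = a := by linarith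
  have hT1 : ∫⁻ x, G1 x ≤ ENNReal.ofReal vB * ENNReal.ofReal (1/b) := by
    rw [hG1, lintegral_indicator measurableSet_closedBall, lintegral_const_mul _ hma]
    have ht : ∫⁻ x in closedBall y (n/2), ENNReal.ofReal (‖x - y‖ ^ (-a))
        = ∫⁻ x in closedBall (0:E) (n/2), ENNReal.ofReal (‖x‖ ^ (-a)) :=
      lintegral_translate volume y (n/2) (fun z => ENNReal.ofReal (‖z‖ ^ (-a)))
    rw [ht, lintegral_rpow_norm_closedBall volume (-a) (n/2) hn2 (by rw [hdim]; linarith),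
      hdim, hdb, ← hV, hdV]
    have heq : (n/2)^(-b) * ((n/2)^b / b) = 1/b := by
      rw [Real.rpow_neg hn2.le]
      field_simp
    rw [← mul_assoc, mul_comm (ENNReal.ofReal ((n/2)^(-b))) _, mul_assoc,
      ← ENNReal.ofReal_mul (by positivity), heq]
  have hT2 : ∫⁻ x, G2 x ≤ ENNReal.ofReal vB * ENNReal.ofReal (4^a/a) := by
    rw [hG2, lintegral_indicator measurableSet_closedBall, lintegral_const_mul _ hmb,
      lintegral_rpow_norm_closedBall volume (-b) (2*n) (by linarith) (by rw [hdim]; linarith),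
      hdim, hda, ← hV, hdV]
    have heq : (n/2)^(-a) * ((2*n)^a / a) = 4^a/a := by
      have h4 : (2*n)/(n/2) = 4 := by field_simp; ring
      calc (n/2)^(-a) * ((2*n)^a / a) = ((2*n)/(n/2))^a / a := by
            rw [Real.div_rpow (by positivity) hn2.le, Real.rpow_neg hn2.le]; ring
        _ = 4^a / a := by rw [h4]
    rw [← mul_assoc, mul_comm (ENNReal.ofReal ((n/2)^(-a))) _, mul_assoc,
      ← ENNReal.ofReal_mul (by positivity), heq]
  have hT3 : ∫⁻ x, G3 x ≤ ENNReal.ofReal (2^a) * (ENNReal.ofReal vB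
      * ENNReal.ofReal (Real.log (1/n))) := by
    have hann := lintegral_rpow_norm_annulus (E := E) volume n hn0 hy1
    rw [hdim] at hann
    rw [hG3, lintegral_indicator (measurableSet_closedBall.diff measurableSet_ball),
      lintegral_const_mul _ hmd, hann, ← hV, hdV]
  calc (∫⁻ x in B, F x).toReal
      ≤ ((vB * (1/b + 4^a/a + 2^a) + 1) * (1 + Real.log (1/n))) := ?_
    _ = (vB * (1/b + 4^a/a + 2^a) + 1) * (1 + Real.log (1/n)) := rfl
  refine ENNReal.toReal_le_of_le_ofReal (by positivity) ?_
  calc ∫⁻ x in B, F x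
      ≤ ∫⁻ x in B, (G1 x + G2 x + G3 x) := setLIntegral_mono (by fun_prop) key
    _ = (∫⁻ x in B, G1 x) + (∫⁻ x in B, G2 x) + (∫⁻ x in B, G3 x) := by
        rw [lintegral_add_right _ hmG3, lintegral_add_right _ hmG2]
    _ ≤ (∫⁻ x, G1 x) + (∫⁻ x, G2 x) + (∫⁻ x, G3 x) := by
        gcongr <;> exact Measure.restrict_le_self
    _ ≤ ENNReal.ofReal vB * ENNReal.ofReal (1/b) + ENNReal.ofReal vB * ENNReal.ofReal (4^a/a)
          + ENNReal.ofReal (2^a) * (ENNReal.ofReal vB * ENNReal.ofReal (Real.log (1/n))) := by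
        gcongr
    _ = ENNReal.ofReal (vB * (1/b) + vB * (4^a/a) + 2^a * (vB * Real.log (1/n))) := by
        rw [← ENNReal.ofReal_mul (by positivity), ← ENNReal.ofReal_mul (by positivity),
          ← ENNReal.ofReal_mul (by positivity), ← ENNReal.ofReal_mul (by positivity),
          ← ENNReal.ofReal_add (by positivity) (by positivity),
          ← ENNReal.ofReal_add (by positivity) (by positivity)]
    _ ≤ ENNReal.ofReal ((vB * (1/b + 4^a/a + 2^a) + 1) * (1 + Real.log (1/n))) := by
        apply ENNReal.ofReal_le_ofReal
        have h2a : (0:ℝ) ≤ 2^a := Real.rpow_nonneg (by norm_num) a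
        have hfr : (0:ℝ) ≤ 1/b + 4^a/a := by positivity
        nlinarith [mul_nonneg hlog0 (mul_nonneg hvB0.le hfr), mul_nonneg hvB0.le h2a, hlog0]
end

section
/- Let d ≥ 1 and let a, b be real numbers with 0 < a, 0 < b and a + b < d. Then there exists a constant C > 0 such that for all y ∈ ℝ^d, ∫_{|x| ≤ 1} |x - y|^{-a} |x|^{-b} dx ≤ C. -/
open MeasureTheory
open scoped ENNReal

section Aux

open Metric Set Real

variable {d : ℕ}

/-- Finiteness of `∫⁻ ‖x‖^(-c)` over the unit ball when `0 < c < d`. -/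
lemma aux_finite (d : ℕ) (hd : 1 ≤ d) {c : ℝ} (hc : 0 < c) (hcd : c < (d : ℝ)) :
    (∫⁻ x : EuclideanSpace ℝ (Fin d) in Metric.closedBall 0 1,
      ENNReal.ofReal (‖x‖ ^ (-c))) < ∞ := by
  set S : Set (EuclideanSpace ℝ (Fin d)) := Metric.closedBall 0 1 with hS
  have h_meas : Measurable fun x : EuclideanSpace ℝ (Fin d) => ‖x‖ ^ (-c) := measurable_norm.pow_const _
  have h_nn : 0 ≤ᵐ[volume.restrict S] fun x : EuclideanSpace ℝ (Fin d) => ‖x‖ ^ (-c) :=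
    Filter.Eventually.of_forall fun x => Real.rpow_nonneg (norm_nonneg x) _
  rw [lintegral_eq_lintegral_meas_le (volume.restrict S) h_nn h_meas.aemeasurable]
  have hV : volume S < ∞ := measure_closedBall_lt_top
  set f := fun t : ℝ => (volume.restrict S) {a : EuclideanSpace ℝ (Fin d) | t ≤ ‖a‖ ^ (-c)} with hf
  calc
    ∫⁻ t in Ioi (0:ℝ), f t ≤ ∫⁻ t in Ioc (0:ℝ) 1 ∪ Ioi 1, f t :=
      lintegral_mono_set Ioi_subset_Ioc_union_Ioi
    _ ≤ (∫⁻ t in Ioc (0:ℝ) 1, f t) + ∫⁻ t in Ioi (1:ℝ), f t := lintegral_union_le _ _ _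
    _ < ∞ := ENNReal.add_lt_top.2 ⟨?_, ?_⟩
  · -- near 0 : bounded by volume of S
    have h1 : ∀ t ∈ Ioc (0:ℝ) 1, f t ≤ volume S := by
      intro t _
      exact le_trans (measure_mono (subset_univ _)) (le_of_eq (Measure.restrict_apply_univ S))
    calc
      ∫⁻ t in Ioc (0:ℝ) 1, f t ≤ ∫⁻ _ in Ioc (0:ℝ) 1, volume S :=
        setLIntegral_mono' measurableSet_Ioc h1
      _ = volume S * volume (Ioc (0:ℝ) 1) := setLIntegral_const _ _
      _ < ∞ := by
        refine ENNReal.mul_lt_top hV ?_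
        simp [Real.volume_Ioc]
  · -- far out : bounded by volume of shrinking closed balls
    have key : ∀ t ∈ Ioi (1:ℝ),
        f t ≤ ENNReal.ofReal (t ^ (-((d : ℝ)/c))) * volume (ball (0 : EuclideanSpace ℝ (Fin d)) 1) := by
      intro t ht
      have ht1 : (1:ℝ) < t := ht
      have ht0 : (0:ℝ) < t := lt_trans one_pos ht1
      have hsub : {a : EuclideanSpace ℝ (Fin d) | t ≤ ‖a‖ ^ (-c)} ⊆ Metric.closedBall 0 (t ^ (-c⁻¹)) := by
        intro x hx
        simp only [mem_setOf_eq] at hx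
        have hx0 : ‖x‖ ≠ 0 := by
          intro h
          rw [h, Real.zero_rpow (by linarith : -c ≠ 0)] at hx
          linarith
        have hxpos : 0 < ‖x‖ := lt_of_le_of_ne (norm_nonneg x) (Ne.symm hx0)
        -- from t ≤ ‖x‖^(-c), get ‖x‖^c ≤ t⁻¹
        have h1 : ‖x‖ ^ c ≤ t⁻¹ := by
          rw [Real.rpow_neg (norm_nonneg x)] at hx
          have hpc : 0 < ‖x‖ ^ c := Real.rpow_pos_of_pos hxpos c
          rw [le_inv_comm₀ ht0 hpc] at hx
          exact hx
        have h2 : ‖x‖ ≤ t ^ (-c⁻¹) := by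
          have h3 : (‖x‖ ^ c) ^ c⁻¹ ≤ (t⁻¹) ^ c⁻¹ :=
            Real.rpow_le_rpow (Real.rpow_nonneg (norm_nonneg x) c) h1 (inv_nonneg.2 hc.le)
          rwa [← Real.rpow_mul (norm_nonneg x), mul_inv_cancel₀ hc.ne', Real.rpow_one,
            Real.inv_rpow ht0.le, ← Real.rpow_neg ht0.le] at h3
        rw [mem_closedBall_zero_iff]
        exact h2
      calc
        f t ≤ volume {a : EuclideanSpace ℝ (Fin d) | t ≤ ‖a‖ ^ (-c)} :=
          Measure.restrict_apply_le _ _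
        _ ≤ volume (Metric.closedBall (0 : EuclideanSpace ℝ (Fin d)) (t ^ (-c⁻¹))) := measure_mono hsub
        _ = ENNReal.ofReal ((t ^ (-c⁻¹)) ^ Module.finrank ℝ (EuclideanSpace ℝ (Fin d))) * volume (ball (0 : EuclideanSpace ℝ (Fin d)) 1) :=
          Measure.addHaar_closedBall _ _ (Real.rpow_nonneg ht0.le _)
        _ = ENNReal.ofReal (t ^ (-((d : ℝ)/c))) * volume (ball (0 : EuclideanSpace ℝ (Fin d)) 1) := by
          congr 1
          rw [← Real.rpow_natCast (t ^ (-c⁻¹)), ← Real.rpow_mul ht0.le]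
          congr 1
          rw [finrank_euclideanSpace_fin]
          field_simp
    calc
      ∫⁻ t in Ioi (1:ℝ), f t
        ≤ ∫⁻ t in Ioi (1:ℝ), ENNReal.ofReal (t ^ (-((d : ℝ)/c))) * volume (ball (0 : EuclideanSpace ℝ (Fin d)) 1) :=
        setLIntegral_mono' measurableSet_Ioi key
      _ = (∫⁻ t in Ioi (1:ℝ), ENNReal.ofReal (t ^ (-((d : ℝ)/c)))) * volume (ball (0 : EuclideanSpace ℝ (Fin d)) 1) :=
        lintegral_mul_const' _ _ measure_ball_lt_top.ne
      _ < ∞ := by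
        refine ENNReal.mul_lt_top ?_ measure_ball_lt_top
        have hlt : -((d : ℝ)/c) < -1 := by
          rw [neg_lt_neg_iff]
          rw [lt_div_iff₀ hc]
          linarith
        exact (integrableOn_Ioi_rpow_of_lt hlt one_pos).setLIntegral_lt_top

/-- Pointwise bound `s^(-a) t^(-b) ≤ t^(-(a+b)) + s^(-(a+b))`. -/
lemma aux_pointwise {a b : ℝ} (ha : 0 < a) (hb : 0 < b) {s t : ℝ} (hs : 0 ≤ s) (ht : 0 ≤ t) :
    s ^ (-a) * t ^ (-b) ≤ t ^ (-(a + b)) + s ^ (-(a + b)) := by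
  rcases eq_or_lt_of_le hs with h | hs'
  · rw [← h, Real.zero_rpow (neg_ne_zero.2 ha.ne'), zero_mul]
    have h1 : (0:ℝ) ≤ t ^ (-(a+b)) := Real.rpow_nonneg ht _
    have h2 : (0:ℝ) ≤ (0:ℝ) ^ (-(a+b)) := Real.rpow_nonneg le_rfl _
    linarith
  rcases eq_or_lt_of_le ht with h | ht'
  · rw [← h, Real.zero_rpow (neg_ne_zero.2 hb.ne'), mul_zero]
    have h1 : (0:ℝ) ≤ (0:ℝ) ^ (-(a+b)) := Real.rpow_nonneg le_rfl _
    have h2 : (0:ℝ) ≤ s ^ (-(a+b)) := Real.rpow_nonneg hs _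
    linarith
  rcases le_total s t with hst | hst
  · have h1 : t ^ (-b) ≤ s ^ (-b) := Real.rpow_le_rpow_of_nonpos hs' hst (by linarith)
    calc s ^ (-a) * t ^ (-b) ≤ s ^ (-a) * s ^ (-b) :=
          mul_le_mul_of_nonneg_left h1 (Real.rpow_nonneg hs _)
      _ = s ^ (-(a + b)) := by rw [← Real.rpow_add hs']; ring_nf
      _ ≤ t ^ (-(a + b)) + s ^ (-(a + b)) :=
          le_add_of_nonneg_left (Real.rpow_nonneg ht _)
  · have h1 : s ^ (-a) ≤ t ^ (-a) := Real.rpow_le_rpow_of_nonpos ht' hst (by linarith)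
    calc s ^ (-a) * t ^ (-b) ≤ t ^ (-a) * t ^ (-b) :=
          mul_le_mul_of_nonneg_right h1 (Real.rpow_nonneg ht _)
      _ = t ^ (-(a + b)) := by rw [← Real.rpow_add ht']; ring_nf
      _ ≤ t ^ (-(a + b)) + s ^ (-(a + b)) :=
          le_add_of_nonneg_right (Real.rpow_nonneg hs _)

/-- Translated integral bound. -/
lemma aux_translate (d : ℕ) {c : ℝ} (hc : 0 < c) (y : EuclideanSpace ℝ (Fin d)) :
    (∫⁻ x : EuclideanSpace ℝ (Fin d) in Metric.closedBall 0 1,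
      ENNReal.ofReal (‖x - y‖ ^ (-c))) ≤
    (∫⁻ x : EuclideanSpace ℝ (Fin d) in Metric.closedBall 0 1,
      ENNReal.ofReal (‖x‖ ^ (-c)))
      + volume (Metric.closedBall (0 : EuclideanSpace ℝ (Fin d)) 1) := by
  set S : Set (EuclideanSpace ℝ (Fin d)) := Metric.closedBall 0 1 with hS
  have htrans : (∫⁻ x in Metric.closedBall y 1, ENNReal.ofReal (‖x - y‖ ^ (-c)))
      = ∫⁻ z : EuclideanSpace ℝ (Fin d) in Metric.closedBall 0 1,
          ENNReal.ofReal (‖z‖ ^ (-c)) := by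
    have hmp := measurePreserving_sub_right
      (volume : Measure (EuclideanSpace ℝ (Fin d))) y
    have hemb := (MeasurableEquiv.subRight y).measurableEmbedding
    have h := hmp.setLIntegral_comp_preimage_emb hemb
      (fun z => ENNReal.ofReal (‖z‖ ^ (-c))) (Metric.closedBall 0 1)
    have hpre : (fun x : EuclideanSpace ℝ (Fin d) => x - y) ⁻¹' Metric.closedBall 0 1
        = Metric.closedBall y 1 := by
      ext z
      simp [Metric.mem_closedBall, dist_eq_norm]
    rw [hpre] at h
    exact h
  calc
    (∫⁻ x in S, ENNReal.ofReal (‖x - y‖ ^ (-c)))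
      ≤ ∫⁻ x in S, ((Metric.closedBall y 1).indicator
          (fun x => ENNReal.ofReal (‖x - y‖ ^ (-c))) x + 1) := by
        refine setLIntegral_mono' Metric.isClosed_closedBall.measurableSet fun x hx => ?_
        by_cases hxy : x ∈ Metric.closedBall y 1
        · rw [Set.indicator_of_mem hxy]
          exact le_self_add
        · rw [Set.indicator_of_notMem hxy, zero_add]
          have h1 : 1 ≤ ‖x - y‖ := by
            rw [Metric.mem_closedBall, dist_eq_norm] at hxy
            linarith [not_le.mp hxy]
          exact ENNReal.ofReal_le_one.2
            (Real.rpow_le_one_of_one_le_of_nonpos h1 (by linarith))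
    _ = (∫⁻ x in S, (Metric.closedBall y 1).indicator
          (fun x => ENNReal.ofReal (‖x - y‖ ^ (-c))) x) + ∫⁻ _ in S, 1 :=
        lintegral_add_right _ measurable_const
    _ ≤ (∫⁻ x, (Metric.closedBall y 1).indicator
          (fun x => ENNReal.ofReal (‖x - y‖ ^ (-c))) x) + volume S := by
        gcongr
        · exact Measure.restrict_le_self
        · rw [setLIntegral_one]
    _ = (∫⁻ x in Metric.closedBall y 1, ENNReal.ofReal (‖x - y‖ ^ (-c))) + volume S := by
        rw [lintegral_indicator Metric.isClosed_closedBall.measurableSet]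
    _ = (∫⁻ x in S, ENNReal.ofReal (‖x‖ ^ (-c))) + volume S := by rw [htrans]

end Aux

theorem stmt2 (d : ℕ) (hd : 1 ≤ d) (a b : ℝ) (ha : 0 < a) (hb : 0 < b)
    (hab : a + b < (d : ℝ)) :
    ∃ C > 0, ∀ y : EuclideanSpace ℝ (Fin d),
      (∫ x in Metric.closedBall (0 : EuclideanSpace ℝ (Fin d)) 1,
          ‖x - y‖ ^ (-a) * ‖x‖ ^ (-b)) ≤ C := by
  set S : Set (EuclideanSpace ℝ (Fin d)) := Metric.closedBall 0 1 with hS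
  set J : ℝ≥0∞ := ∫⁻ x : EuclideanSpace ℝ (Fin d) in Metric.closedBall 0 1,
      ENNReal.ofReal (‖x‖ ^ (-(a + b))) with hJdef
  have hc : 0 < a + b := by linarith
  have hJ : J < ∞ := aux_finite d hd hc hab
  have hVfin : volume S < ∞ := measure_closedBall_lt_top
  have hfin : 2 * J + volume S ≠ ∞ :=
    ENNReal.add_ne_top.2 ⟨ENNReal.mul_ne_top (by norm_num) hJ.ne, hVfin.ne⟩
  refine ⟨(2 * J + volume S).toReal + 1, by positivity, fun y => ?_⟩
  have hFnn : ∀ x : EuclideanSpace ℝ (Fin d), 0 ≤ ‖x - y‖ ^ (-a) * ‖x‖ ^ (-b) :=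
    fun x => mul_nonneg (Real.rpow_nonneg (norm_nonneg _) _)
      (Real.rpow_nonneg (norm_nonneg _) _)
  have hFmeas : Measurable fun x : EuclideanSpace ℝ (Fin d) =>
      ‖x - y‖ ^ (-a) * ‖x‖ ^ (-b) :=
    (((measurable_id.sub measurable_const).norm).pow_const _).mul
      (measurable_norm.pow_const _)
  rw [integral_eq_lintegral_of_nonneg_ae (Filter.Eventually.of_forall hFnn)
    hFmeas.aestronglyMeasurable]
  have hle : (∫⁻ x in S, ENNReal.ofReal (‖x - y‖ ^ (-a) * ‖x‖ ^ (-b)))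
      ≤ 2 * J + volume S := by
    calc
      (∫⁻ x in S, ENNReal.ofReal (‖x - y‖ ^ (-a) * ‖x‖ ^ (-b)))
        ≤ ∫⁻ x in S, (ENNReal.ofReal (‖x‖ ^ (-(a + b)))
            + ENNReal.ofReal (‖x - y‖ ^ (-(a + b)))) := by
          refine lintegral_mono fun x => ?_
          rw [← ENNReal.ofReal_add (Real.rpow_nonneg (norm_nonneg _) _)
            (Real.rpow_nonneg (norm_nonneg _) _)]
          exact ENNReal.ofReal_le_ofReal
            (aux_pointwise ha hb (norm_nonneg _) (norm_nonneg _))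
      _ = (∫⁻ x in S, ENNReal.ofReal (‖x‖ ^ (-(a + b))))
            + ∫⁻ x in S, ENNReal.ofReal (‖x - y‖ ^ (-(a + b))) :=
          lintegral_add_left ((measurable_norm.pow_const _).ennreal_ofReal) _
      _ ≤ J + (J + volume S) := add_le_add le_rfl (aux_translate d hc y)
      _ = 2 * J + volume S := by ring
  have := ENNReal.toReal_mono hfin hle
  linarith
end

section
/- Let d ≥ 1, a > d and 0 < b < d. Then there exists a constant C > 0 such that for all y ∈ ℝ^d with y ≠ 0, ∫_{ℝ^d} (1 + |x - y|^a)^{-1} |x|^{-b} dx ≤ C |y|^{-b}. -/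
open MeasureTheory

open Metric Set

lemma stmt3_aux_ball (d : ℕ) (b : ℝ) (hb : 0 < b) (hbd : b < d) {r : ℝ} (hr : 0 < r) :
    ∫⁻ x : EuclideanSpace ℝ (Fin d) in closedBall 0 r, ENNReal.ofReal (‖x‖ ^ (-b)) ≤
      ENNReal.ofReal (r ^ ((d : ℝ) - b) * (1 + b / ((d : ℝ) - b))) *
        volume (ball (0 : EuclideanSpace ℝ (Fin d)) 1) := by
  have hdb : (0 : ℝ) < (d : ℝ) - b := by linarith
  have hb' : -b ≠ 0 := by linarith
  have hmeas : AEMeasurable (fun x : EuclideanSpace ℝ (Fin d) => ‖x‖ ^ (-b))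
      (volume.restrict (closedBall 0 r)) := by fun_prop
  rw [lintegral_eq_lintegral_meas_le _
    (Filter.Eventually.of_forall fun x => Real.rpow_nonneg (norm_nonneg _) _) hmeas]
  set t0 := r ^ (-b) with ht0
  have ht0pos : 0 < t0 := Real.rpow_pos_of_pos hr _
  have key : ∀ t ∈ Ioi (0 : ℝ),
      (volume.restrict (closedBall (0 : EuclideanSpace ℝ (Fin d)) r))
          {a : EuclideanSpace ℝ (Fin d) | t ≤ ‖a‖ ^ (-b)} ≤
        ENNReal.ofReal ((min r (t ^ (-b⁻¹))) ^ d) *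
          volume (ball (0 : EuclideanSpace ℝ (Fin d)) 1) := by
    intro t ht
    rw [Measure.restrict_apply' measurableSet_closedBall]
    have hsub : {a : EuclideanSpace ℝ (Fin d) | t ≤ ‖a‖ ^ (-b)} ∩ closedBall 0 r ⊆
        closedBall (0 : EuclideanSpace ℝ (Fin d)) (min r (t ^ (-b⁻¹))) := by
      rintro x ⟨hx1, hx2⟩
      simp only [mem_setOf_eq] at hx1
      rw [mem_closedBall_zero_iff] at hx2 ⊢
      refine le_min hx2 ?_
      have hxpos : 0 < ‖x‖ := by
        rcases (norm_nonneg x).lt_or_eq with h | h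
        · exact h
        · exfalso
          rw [← h, Real.zero_rpow hb'] at hx1
          exact absurd (lt_of_lt_of_le ht hx1) (lt_irrefl 0)
      have h1 : (‖x‖ ^ (-b)) ^ (-b⁻¹) ≤ t ^ (-b⁻¹) :=
        Real.rpow_le_rpow_of_nonpos ht hx1 (by simp [inv_nonneg.mpr hb.le])
      have h2 : (‖x‖ ^ (-b)) ^ (-b⁻¹) = ‖x‖ := by
        rw [← Real.rpow_mul hxpos.le, show (-b) * (-b⁻¹) = 1 by field_simp, Real.rpow_one]
      rwa [h2] at h1
    calc volume ({a : EuclideanSpace ℝ (Fin d) | t ≤ ‖a‖ ^ (-b)} ∩ closedBall 0 r)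
        ≤ volume (closedBall (0 : EuclideanSpace ℝ (Fin d)) (min r (t ^ (-b⁻¹)))) :=
          measure_mono hsub
      _ = ENNReal.ofReal ((min r (t ^ (-b⁻¹))) ^
            Module.finrank ℝ (EuclideanSpace ℝ (Fin d))) *
            volume (ball (0 : EuclideanSpace ℝ (Fin d)) 1) :=
          Measure.addHaar_closedBall _ _
            (le_min hr.le (Real.rpow_nonneg (le_of_lt ht) _))
      _ = _ := by simp
  calc ∫⁻ t in Ioi (0 : ℝ), (volume.restrict (closedBall (0 : EuclideanSpace ℝ (Fin d)) r))
          {a : EuclideanSpace ℝ (Fin d) | t ≤ ‖a‖ ^ (-b)}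
      ≤ ∫⁻ t in Ioi (0 : ℝ),
          ENNReal.ofReal ((min r (t ^ (-b⁻¹))) ^ d) *
            volume (ball (0 : EuclideanSpace ℝ (Fin d)) 1) := by
        refine lintegral_mono_ae ?_
        filter_upwards [ae_restrict_mem measurableSet_Ioi] with t ht using key t ht
    _ = (∫⁻ t in Ioi (0 : ℝ), ENNReal.ofReal ((min r (t ^ (-b⁻¹))) ^ d)) *
          volume (ball (0 : EuclideanSpace ℝ (Fin d)) 1) :=
        lintegral_mul_const' _ _ measure_ball_lt_top.ne
    _ ≤ ENNReal.ofReal (r ^ ((d : ℝ) - b) * (1 + b / ((d : ℝ) - b))) *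
          volume (ball (0 : EuclideanSpace ℝ (Fin d)) 1) := by
        gcongr
        rw [← Ioc_union_Ioi_eq_Ioi ht0pos.le,
          lintegral_union measurableSet_Ioi (Ioc_disjoint_Ioi le_rfl)]
        have partA : ∫⁻ t in Ioc (0 : ℝ) t0, ENNReal.ofReal ((min r (t ^ (-b⁻¹))) ^ d) ≤
            ENNReal.ofReal (r ^ ((d : ℝ) - b)) := by
          calc ∫⁻ t in Ioc (0 : ℝ) t0, ENNReal.ofReal ((min r (t ^ (-b⁻¹))) ^ d)
              ≤ ∫⁻ _ in Ioc (0 : ℝ) t0, ENNReal.ofReal (r ^ d) := by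
                refine lintegral_mono_ae ?_
                filter_upwards [ae_restrict_mem measurableSet_Ioc] with t ht
                refine ENNReal.ofReal_le_ofReal ?_
                exact pow_le_pow_left₀ (le_min hr.le (Real.rpow_nonneg ht.1.le _))
                  (min_le_left _ _) d
            _ = ENNReal.ofReal (r ^ d) * ENNReal.ofReal t0 := by
                rw [setLIntegral_const, Real.volume_Ioc, sub_zero]
            _ = ENNReal.ofReal (r ^ ((d : ℝ) - b)) := by
                rw [← ENNReal.ofReal_mul (by positivity)]
                congr 1
                rw [← Real.rpow_natCast r d, ht0, ← Real.rpow_add hr,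
                  show (d : ℝ) + -b = (d : ℝ) - b by ring]
        have partB : ∫⁻ t in Ioi t0, ENNReal.ofReal ((min r (t ^ (-b⁻¹))) ^ d) ≤
            ENNReal.ofReal (r ^ ((d : ℝ) - b) * (b / ((d : ℝ) - b))) := by
          have he : -((d : ℝ) / b) < -1 := by
            rw [neg_lt_neg_iff]
            exact (one_lt_div hb).mpr hbd
          calc ∫⁻ t in Ioi t0, ENNReal.ofReal ((min r (t ^ (-b⁻¹))) ^ d)
              ≤ ∫⁻ t in Ioi t0, ENNReal.ofReal (t ^ (-((d : ℝ) / b))) := by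
                refine lintegral_mono_ae ?_
                filter_upwards [ae_restrict_mem measurableSet_Ioi] with t ht
                have htpos : 0 < t := ht0pos.trans ht
                refine ENNReal.ofReal_le_ofReal ?_
                have h1 : (min r (t ^ (-b⁻¹))) ^ d ≤ (t ^ (-b⁻¹)) ^ d :=
                  pow_le_pow_left₀ (le_min hr.le (Real.rpow_nonneg htpos.le _))
                    (min_le_right _ _) d
                refine h1.trans_eq ?_
                rw [← Real.rpow_natCast (t ^ (-b⁻¹)) d, ← Real.rpow_mul htpos.le]
                congr 1
                field_simp
            _ = ENNReal.ofReal (∫ t in Ioi t0, t ^ (-((d : ℝ) / b))) := by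
                rw [ofReal_integral_eq_lintegral_ofReal
                  (integrableOn_Ioi_rpow_of_lt he ht0pos) ?_]
                filter_upwards [ae_restrict_mem measurableSet_Ioi] with t ht
                exact Real.rpow_nonneg (ht0pos.trans ht).le _
            _ = ENNReal.ofReal (r ^ ((d : ℝ) - b) * (b / ((d : ℝ) - b))) := by
                rw [integral_Ioi_rpow_of_lt he ht0pos]
                congr 1
                have h2 : t0 ^ (-((d : ℝ) / b) + 1) = r ^ ((d : ℝ) - b) := by
                  rw [ht0, ← Real.rpow_mul hr.le]
                  congr 1
                  field_simp
                  ring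
                rw [h2]
                have hbne : b ≠ 0 := hb.ne'
                have h5 : (d : ℝ) - b ≠ 0 := hdb.ne'
                have h6 : -((d : ℝ)) + b ≠ 0 := by
                  intro h; apply h5; linarith
                field_simp
                ring
        calc (∫⁻ t in Ioc (0:ℝ) t0, ENNReal.ofReal ((min r (t ^ (-b⁻¹))) ^ d)) +
              ∫⁻ t in Ioi t0, ENNReal.ofReal ((min r (t ^ (-b⁻¹))) ^ d)
            ≤ ENNReal.ofReal (r ^ ((d : ℝ) - b)) +
              ENNReal.ofReal (r ^ ((d : ℝ) - b) * (b / ((d : ℝ) - b))) :=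
              add_le_add partA partB
          _ = ENNReal.ofReal (r ^ ((d : ℝ) - b) * (1 + b / ((d : ℝ) - b))) := by
              rw [← ENNReal.ofReal_add (by positivity) (by positivity)]
              congr 1
              ring

lemma stmt3_aux_pt (a t : ℝ) (ha0 : 0 < a) (ht : 0 ≤ t) :
    (1 + t ^ a)⁻¹ ≤ 2 ^ a * (1 + t) ^ (-a) := by
  have h0 : (0:ℝ) < 1 + t ^ a := by positivity
  have h1 : (1 + t) ^ a ≤ 2 ^ a * (1 + t ^ a) := by
    have hmax : 1 + t ≤ 2 * max 1 t := by
      rcases le_total t 1 with h | h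
      · calc 1 + t ≤ 1 + 1 := by linarith
          _ = 2 * 1 := by ring
          _ ≤ 2 * max 1 t := by gcongr; exact le_max_left _ _
      · calc 1 + t ≤ t + t := by linarith
          _ = 2 * t := by ring
          _ ≤ 2 * max 1 t := by gcongr; exact le_max_right _ _
    have h2 : (max 1 t) ^ a ≤ 1 + t ^ a := by
      rcases le_total t 1 with h | h
      · rw [max_eq_left h, Real.one_rpow]
        have := Real.rpow_nonneg ht a; linarith
      · rw [max_eq_right h]
        have := Real.rpow_nonneg ht a
        nlinarith [Real.rpow_nonneg ht a]
    calc (1 + t) ^ a ≤ (2 * max 1 t) ^ a :=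
          Real.rpow_le_rpow (by linarith) hmax ha0.le
      _ = 2 ^ a * (max 1 t) ^ a :=
          Real.mul_rpow (by norm_num) (le_max_of_le_left zero_le_one)
      _ ≤ 2 ^ a * (1 + t ^ a) := by
          gcongr
  have h3 : (2:ℝ) ^ (-a) * (1 + t) ^ a ≤ 1 + t ^ a := by
    have h4 : (2:ℝ) ^ (-a) * (2 ^ a * (1 + t ^ a)) = 1 + t ^ a := by
      rw [← mul_assoc, ← Real.rpow_add (by norm_num : (0:ℝ) < 2)]
      simp
    calc (2:ℝ) ^ (-a) * (1 + t) ^ a ≤ 2 ^ (-a) * (2 ^ a * (1 + t ^ a)) := by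
          gcongr
      _ = 1 + t ^ a := h4
  calc (1 + t ^ a)⁻¹ ≤ ((2:ℝ) ^ (-a) * (1 + t) ^ a)⁻¹ := by
        apply inv_anti₀ (by positivity) h3
    _ = 2 ^ a * (1 + t) ^ (-a) := by
        rw [mul_inv, Real.rpow_neg (by norm_num : (0:ℝ) ≤ 2),
          Real.rpow_neg (by positivity : (0:ℝ) ≤ 1 + t), inv_inv]

lemma stmt3_aux_tail (d : ℕ) (hd : 1 ≤ d) (a : ℝ) (ha : (d : ℝ) < a) :
    ∫⁻ x : EuclideanSpace ℝ (Fin d), ENNReal.ofReal ((1 + ‖x‖ ^ a)⁻¹) < ⊤ := by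
  have ha0 : 0 < a := lt_of_le_of_lt (by exact_mod_cast Nat.cast_nonneg d) ha
  have hfr : (Module.finrank ℝ (EuclideanSpace ℝ (Fin d)) : ℝ) < a := by simpa using ha
  have hfin := finite_integral_one_add_norm (E := EuclideanSpace ℝ (Fin d)) (μ := volume) hfr
  calc ∫⁻ x : EuclideanSpace ℝ (Fin d), ENNReal.ofReal ((1 + ‖x‖ ^ a)⁻¹)
      ≤ ∫⁻ x : EuclideanSpace ℝ (Fin d), ENNReal.ofReal (2 ^ a) *
          ENNReal.ofReal ((1 + ‖x‖) ^ (-a)) := by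
        refine lintegral_mono fun x => ?_
        rw [← ENNReal.ofReal_mul (by positivity)]
        exact ENNReal.ofReal_le_ofReal (stmt3_aux_pt a ‖x‖ ha0 (norm_nonneg _))
    _ = ENNReal.ofReal (2 ^ a) *
          ∫⁻ x : EuclideanSpace ℝ (Fin d), ENNReal.ofReal ((1 + ‖x‖) ^ (-a)) :=
        lintegral_const_mul' _ _ ENNReal.ofReal_ne_top
    _ < ⊤ := ENNReal.mul_lt_top ENNReal.ofReal_lt_top hfin

set_option maxHeartbeats 1000000 in
theorem stmt3 (d : ℕ) (hd : 1 ≤ d) (a b : ℝ) (ha : (d : ℝ) < a)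
    (hb : 0 < b) (hbd : b < d) :
    ∃ C > 0, ∀ y : EuclideanSpace ℝ (Fin d), y ≠ 0 →
      (∫ x : EuclideanSpace ℝ (Fin d), (1 + ‖x - y‖ ^ a)⁻¹ * ‖x‖ ^ (-b))
        ≤ C * ‖y‖ ^ (-b) := by
  have ha0 : (0 : ℝ) < a := lt_of_le_of_lt (by exact_mod_cast Nat.cast_nonneg d) ha
  have hdb : (0 : ℝ) < (d : ℝ) - b := by linarith
  set V : ℝ := (volume (ball (0 : EuclideanSpace ℝ (Fin d)) 1)).toReal with hV
  set K2 : ENNReal := ∫⁻ x : EuclideanSpace ℝ (Fin d), ENNReal.ofReal ((1 + ‖x‖ ^ a)⁻¹)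
    with hK2
  have hK2top : K2 < ⊤ := stmt3_aux_tail d hd a ha
  set K1 : ℝ := 1 + b / ((d : ℝ) - b) with hK1
  have hK1pos : 0 < K1 := by
    rw [hK1]
    have : 0 < b / ((d : ℝ) - b) := div_pos hb hdb
    linarith
  have hVnn : 0 ≤ V := ENNReal.toReal_nonneg
  have h2b : (0 : ℝ) < 2 ^ b := Real.rpow_pos_of_pos two_pos b
  have h2a : (0 : ℝ) < 2 ^ a := Real.rpow_pos_of_pos two_pos a
  set C : ℝ := V * K1 * 2 ^ b * (1 + 2 ^ a) + 2 ^ b * K2.toReal + 1 with hC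
  have hCpos : 0 < C := by
    have h1 : 0 ≤ V * K1 * 2 ^ b * (1 + 2 ^ a) := by
      apply mul_nonneg (mul_nonneg (mul_nonneg hVnn hK1pos.le) h2b.le)
      linarith
    have h2 : 0 ≤ 2 ^ b * K2.toReal := mul_nonneg h2b.le ENNReal.toReal_nonneg
    rw [hC]; linarith
  refine ⟨C, hCpos, fun y hy => ?_⟩
  set R : ℝ := ‖y‖ with hRdef
  have hRpos : 0 < R := norm_pos_iff.mpr hy
  have hR2 : 0 < R / 2 := half_pos hRpos
  have hRbnn : 0 ≤ R ^ (-b) := Real.rpow_nonneg hRpos.le _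
  -- pass to lintegral
  have hmeas : AEStronglyMeasurable
      (fun x : EuclideanSpace ℝ (Fin d) => (1 + ‖x - y‖ ^ a)⁻¹ * ‖x‖ ^ (-b)) volume := by
    apply Measurable.aestronglyMeasurable
    fun_prop
  have hnn : 0 ≤ᵐ[volume]
      fun x : EuclideanSpace ℝ (Fin d) => (1 + ‖x - y‖ ^ a)⁻¹ * ‖x‖ ^ (-b) :=
    Filter.Eventually.of_forall fun x => by positivity
  rw [integral_eq_lintegral_of_nonneg_ae hnn hmeas]
  refine ENNReal.toReal_le_of_le_ofReal (mul_nonneg hCpos.le hRbnn) ?_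
  -- split the integral
  rw [← lintegral_add_compl
    (fun x : EuclideanSpace ℝ (Fin d) => ENNReal.ofReal ((1 + ‖x - y‖ ^ a)⁻¹ * ‖x‖ ^ (-b)))
    (measurableSet_closedBall (x := (0 : EuclideanSpace ℝ (Fin d))) (ε := R / 2))]
  set m : ℝ := min 1 (2 ^ a * R ^ (-a)) with hm
  have hmnn : 0 ≤ m := le_min zero_le_one (by positivity)
  -- core real inequality
  have e1 : (R / 2) ^ ((d : ℝ) - b) ≤ R ^ ((d : ℝ) - b) * 2 ^ b := by
    rw [div_eq_mul_inv, Real.mul_rpow hRpos.le (by norm_num)]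
    have h1 : ((2 : ℝ)⁻¹) ^ ((d : ℝ) - b) = 2 ^ (-((d : ℝ) - b)) := by
      rw [Real.inv_rpow (by norm_num), ← Real.rpow_neg (by norm_num)]
    rw [h1]
    apply mul_le_mul_of_nonneg_left _ (Real.rpow_nonneg hRpos.le _)
    apply Real.rpow_le_rpow_of_exponent_le one_le_two
    have : (0 : ℝ) ≤ (d : ℝ) := Nat.cast_nonneg d
    linarith
  have hcore : m * (R / 2) ^ ((d : ℝ) - b) ≤ 2 ^ b * (1 + 2 ^ a) * R ^ (-b) := by
    rcases le_total R 1 with hR1 | hR1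
    · have e2 : R ^ ((d : ℝ) - b) ≤ R ^ (-b) := by
        rw [show (d : ℝ) - b = (d : ℝ) + -b by ring, Real.rpow_add hRpos]
        have h3 : R ^ ((d : ℝ)) ≤ 1 := Real.rpow_le_one hRpos.le hR1 (Nat.cast_nonneg d)
        nlinarith [Real.rpow_nonneg hRpos.le (-b)]
      calc m * (R / 2) ^ ((d : ℝ) - b)
          ≤ 1 * (R ^ ((d : ℝ) - b) * 2 ^ b) :=
            mul_le_mul (min_le_left _ _) e1 (Real.rpow_nonneg hR2.le _) zero_le_one
        _ = R ^ ((d : ℝ) - b) * 2 ^ b := one_mul _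
        _ ≤ R ^ (-b) * 2 ^ b := mul_le_mul_of_nonneg_right e2 h2b.le
        _ ≤ 2 ^ b * (1 + 2 ^ a) * R ^ (-b) := by nlinarith [mul_nonneg (mul_nonneg h2b.le h2a.le) hRbnn]
    · have e4 : R ^ (-a) * R ^ ((d : ℝ) - b) = R ^ ((d : ℝ) - a) * R ^ (-b) := by
        rw [← Real.rpow_add hRpos, ← Real.rpow_add hRpos]
        congr 1
        ring
      have e5 : R ^ ((d : ℝ) - a) ≤ 1 :=
        Real.rpow_le_one_of_one_le_of_nonpos hR1 (by linarith)
      calc m * (R / 2) ^ ((d : ℝ) - b)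
          ≤ (2 ^ a * R ^ (-a)) * (R ^ ((d : ℝ) - b) * 2 ^ b) :=
            mul_le_mul (min_le_right _ _) e1 (Real.rpow_nonneg hR2.le _) (by positivity)
        _ = 2 ^ a * 2 ^ b * (R ^ (-a) * R ^ ((d : ℝ) - b)) := by ring
        _ = 2 ^ a * 2 ^ b * (R ^ ((d : ℝ) - a) * R ^ (-b)) := by rw [e4]
        _ ≤ 2 ^ a * 2 ^ b * (1 * R ^ (-b)) := by
            apply mul_le_mul_of_nonneg_left _ (by positivity)
            exact mul_le_mul_of_nonneg_right e5 hRbnn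
        _ ≤ 2 ^ b * (1 + 2 ^ a) * R ^ (-b) := by nlinarith [mul_nonneg h2b.le hRbnn]
  -- Term 1
  have H1 : ∫⁻ x : EuclideanSpace ℝ (Fin d) in closedBall 0 (R / 2),
      ENNReal.ofReal ((1 + ‖x - y‖ ^ a)⁻¹ * ‖x‖ ^ (-b)) ≤
      ENNReal.ofReal (V * K1 * 2 ^ b * (1 + 2 ^ a) * R ^ (-b)) := by
    calc ∫⁻ x : EuclideanSpace ℝ (Fin d) in closedBall 0 (R / 2),
          ENNReal.ofReal ((1 + ‖x - y‖ ^ a)⁻¹ * ‖x‖ ^ (-b))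
        ≤ ∫⁻ x : EuclideanSpace ℝ (Fin d) in closedBall 0 (R / 2),
            ENNReal.ofReal m * ENNReal.ofReal (‖x‖ ^ (-b)) := by
          refine lintegral_mono_ae ?_
          filter_upwards [ae_restrict_mem measurableSet_closedBall] with x hx
          rw [ENNReal.ofReal_mul (by positivity)]
          have hxle : ‖x‖ ≤ R / 2 := mem_closedBall_zero_iff.mp hx
          have hxy : R / 2 ≤ ‖x - y‖ := by
            have h1 : ‖y‖ - ‖x‖ ≤ ‖y - x‖ := norm_sub_norm_le y x
            rw [norm_sub_rev] at h1
            rw [← hRdef] at h1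
            linarith
          have hbound : (1 + ‖x - y‖ ^ a)⁻¹ ≤ m := by
            refine le_min ?_ ?_
            · have h2 : (1 : ℝ) ≤ 1 + ‖x - y‖ ^ a :=
                le_add_of_nonneg_right (Real.rpow_nonneg (norm_nonneg _) a)
              exact inv_le_one_of_one_le₀ h2
            · have h2 : (R / 2) ^ a ≤ 1 + ‖x - y‖ ^ a := by
                have h3 : (R / 2) ^ a ≤ ‖x - y‖ ^ a :=
                  Real.rpow_le_rpow hR2.le hxy ha0.le
                linarith
              have h3 : ((R / 2) ^ a)⁻¹ = 2 ^ a * R ^ (-a) := by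
                rw [Real.div_rpow hRpos.le (by norm_num), Real.rpow_neg hRpos.le,
                  inv_div, div_eq_mul_inv]
              calc (1 + ‖x - y‖ ^ a)⁻¹ ≤ ((R / 2) ^ a)⁻¹ := inv_anti₀ (by positivity) h2
                _ = 2 ^ a * R ^ (-a) := h3
          exact mul_le_mul_left (ENNReal.ofReal_le_ofReal hbound) _
      _ = ENNReal.ofReal m * ∫⁻ x : EuclideanSpace ℝ (Fin d) in closedBall 0 (R / 2),
            ENNReal.ofReal (‖x‖ ^ (-b)) :=
          lintegral_const_mul' _ _ ENNReal.ofReal_ne_top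
      _ ≤ ENNReal.ofReal m *
            (ENNReal.ofReal ((R / 2) ^ ((d : ℝ) - b) * K1) *
              volume (ball (0 : EuclideanSpace ℝ (Fin d)) 1)) := by
          gcongr
          exact stmt3_aux_ball d b hb hbd hR2
      _ = ENNReal.ofReal (m * ((R / 2) ^ ((d : ℝ) - b) * K1) * V) := by
          rw [show volume (ball (0 : EuclideanSpace ℝ (Fin d)) 1) = ENNReal.ofReal V from
            (ENNReal.ofReal_toReal measure_ball_lt_top.ne).symm]
          rw [← ENNReal.ofReal_mul (by positivity), ← ENNReal.ofReal_mul (by positivity)]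
          congr 1
          ring
      _ ≤ ENNReal.ofReal (V * K1 * 2 ^ b * (1 + 2 ^ a) * R ^ (-b)) := by
          apply ENNReal.ofReal_le_ofReal
          calc m * ((R / 2) ^ ((d : ℝ) - b) * K1) * V
              = (m * (R / 2) ^ ((d : ℝ) - b)) * (K1 * V) := by ring
            _ ≤ (2 ^ b * (1 + 2 ^ a) * R ^ (-b)) * (K1 * V) :=
                mul_le_mul_of_nonneg_right hcore (mul_nonneg hK1pos.le hVnn)
            _ = V * K1 * 2 ^ b * (1 + 2 ^ a) * R ^ (-b) := by ring
  -- Term 2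
  have htrans : ∫⁻ x : EuclideanSpace ℝ (Fin d),
      ENNReal.ofReal ((1 + ‖x - y‖ ^ a)⁻¹) = K2 := by
    rw [hK2]
    simp_rw [sub_eq_add_neg]
    exact lintegral_add_right_eq_self
      (fun x : EuclideanSpace ℝ (Fin d) => ENNReal.ofReal ((1 + ‖x‖ ^ a)⁻¹)) (-y)
  have H2 : ∫⁻ x : EuclideanSpace ℝ (Fin d) in (closedBall 0 (R / 2))ᶜ,
      ENNReal.ofReal ((1 + ‖x - y‖ ^ a)⁻¹ * ‖x‖ ^ (-b)) ≤
      ENNReal.ofReal (2 ^ b * K2.toReal * R ^ (-b)) := by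
    have hhalf : (R / 2) ^ (-b) = 2 ^ b * R ^ (-b) := by
      rw [Real.rpow_neg hR2.le, Real.div_rpow hRpos.le (by norm_num : (0:ℝ) ≤ 2),
        inv_div, div_eq_mul_inv, ← Real.rpow_neg hRpos.le]
    calc ∫⁻ x : EuclideanSpace ℝ (Fin d) in (closedBall 0 (R / 2))ᶜ,
          ENNReal.ofReal ((1 + ‖x - y‖ ^ a)⁻¹ * ‖x‖ ^ (-b))
        ≤ ∫⁻ x : EuclideanSpace ℝ (Fin d) in (closedBall 0 (R / 2))ᶜ,
            ENNReal.ofReal ((R / 2) ^ (-b)) * ENNReal.ofReal ((1 + ‖x - y‖ ^ a)⁻¹) := by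
          refine lintegral_mono_ae ?_
          filter_upwards [ae_restrict_mem measurableSet_closedBall.compl] with x hx
          have hxge : R / 2 ≤ ‖x‖ := by
            rw [mem_compl_iff, mem_closedBall_zero_iff] at hx
            linarith [lt_of_not_ge hx]
          rw [ENNReal.ofReal_mul (by positivity), mul_comm]
          refine mul_le_mul_left (ENNReal.ofReal_le_ofReal ?_) _
          exact Real.rpow_le_rpow_of_nonpos hR2 hxge (neg_nonpos.mpr hb.le)
      _ = ENNReal.ofReal ((R / 2) ^ (-b)) *
            ∫⁻ x : EuclideanSpace ℝ (Fin d) in (closedBall 0 (R / 2))ᶜ,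
              ENNReal.ofReal ((1 + ‖x - y‖ ^ a)⁻¹) :=
          lintegral_const_mul' _ _ ENNReal.ofReal_ne_top
      _ ≤ ENNReal.ofReal ((R / 2) ^ (-b)) *
            ∫⁻ x : EuclideanSpace ℝ (Fin d),
              ENNReal.ofReal ((1 + ‖x - y‖ ^ a)⁻¹) := by
          gcongr
          exact Measure.restrict_le_self
      _ = ENNReal.ofReal ((R / 2) ^ (-b)) * ENNReal.ofReal K2.toReal := by
          rw [htrans, ENNReal.ofReal_toReal hK2top.ne]
      _ = ENNReal.ofReal ((R / 2) ^ (-b) * K2.toReal) :=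
          (ENNReal.ofReal_mul (by positivity)).symm
      _ = ENNReal.ofReal (2 ^ b * K2.toReal * R ^ (-b)) := by
          rw [hhalf]
          ring_nf
  calc (∫⁻ x : EuclideanSpace ℝ (Fin d) in closedBall 0 (R / 2),
        ENNReal.ofReal ((1 + ‖x - y‖ ^ a)⁻¹ * ‖x‖ ^ (-b))) +
      ∫⁻ x : EuclideanSpace ℝ (Fin d) in (closedBall 0 (R / 2))ᶜ,
        ENNReal.ofReal ((1 + ‖x - y‖ ^ a)⁻¹ * ‖x‖ ^ (-b))
      ≤ ENNReal.ofReal (V * K1 * 2 ^ b * (1 + 2 ^ a) * R ^ (-b)) +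
        ENNReal.ofReal (2 ^ b * K2.toReal * R ^ (-b)) := add_le_add H1 H2
    _ = ENNReal.ofReal (V * K1 * 2 ^ b * (1 + 2 ^ a) * R ^ (-b) +
        2 ^ b * K2.toReal * R ^ (-b)) := by
        rw [← ENNReal.ofReal_add ?_ ?_]
        · apply mul_nonneg _ hRbnn
          apply mul_nonneg (mul_nonneg (mul_nonneg hVnn hK1pos.le) h2b.le)
          linarith
        · exact mul_nonneg (mul_nonneg h2b.le ENNReal.toReal_nonneg) hRbnn
    _ ≤ ENNReal.ofReal (C * R ^ (-b)) := by
        apply ENNReal.ofReal_le_ofReal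
        rw [hC]
        nlinarith [hRbnn]
end

section
/- Let d ≥ 3, 0 ≤ γ < d, f(x) = ∫_0^1 (4πs)^{-d/2} exp(-|x|²/(4s)) ds, and f_γ(y) = ∫_{ℝ^d} f(y-x)|x|^{-γ} dx. Then sup_{|y| > 1} |y|^γ f_γ(y) < ∞. -/
open MeasureTheory Real Set Metric

noncomputable def heatKernel (d : ℕ) (t : ℝ) (x : EuclideanSpace ℝ (Fin d)) : ℝ :=
  (4 * Real.pi * t) ^ (-(d : ℝ) / 2) * Real.exp (-‖x‖ ^ 2 / (4 * t))

noncomputable def fOcc (d : ℕ) (x : EuclideanSpace ℝ (Fin d)) : ℝ :=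
  ∫ s in (0 : ℝ)..1, heatKernel d s x

noncomputable def fGamma (d : ℕ) (γ : ℝ) (y : EuclideanSpace ℝ (Fin d)) : ℝ :=
  ∫ x : EuclideanSpace ℝ (Fin d), fOcc d (y - x) * ‖x‖ ^ (-γ)

lemma hk_nonneg (d : ℕ) {s : ℝ} (hs : 0 ≤ s) (x : EuclideanSpace ℝ (Fin d)) :
    0 ≤ heatKernel d s x := by
  unfold heatKernel
  have h4 : (0:ℝ) ≤ 4 * Real.pi * s := by positivity
  exact mul_nonneg (Real.rpow_nonneg h4 _) (Real.exp_nonneg _)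

lemma fOcc_nonneg (d : ℕ) (x : EuclideanSpace ℝ (Fin d)) : 0 ≤ fOcc d x :=
  intervalIntegral.integral_nonneg zero_le_one (fun s hs => hk_nonneg d hs.1 x)

lemma measurable_hk (d : ℕ) :
    Measurable (fun p : ℝ × EuclideanSpace ℝ (Fin d) => heatKernel d p.1 p.2) := by
  unfold heatKernel; fun_prop

lemma integrable_gauss (d : ℕ) {b : ℝ} (hb : 0 < b) :
    Integrable (fun v : EuclideanSpace ℝ (Fin d) => rexp (-b * ‖v‖ ^ 2)) := by
  have h := (GaussianFourier.integrable_cexp_neg_mul_sq_norm_add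
      (V := EuclideanSpace ℝ (Fin d)) (b := (b : ℂ)) (by simpa using hb) 0 0).norm
  refine h.congr (Filter.Eventually.of_forall fun v => ?_)
  simp only [Complex.norm_exp]
  norm_num
  left
  norm_cast

lemma hk_rw (d : ℕ) {s : ℝ} (hs : 0 < s) :
    heatKernel d s = fun x : EuclideanSpace ℝ (Fin d) =>
      (4 * Real.pi * s) ^ (-(d : ℝ) / 2) * rexp (-(1 / (4 * s)) * ‖x‖ ^ 2) := by
  funext x
  unfold heatKernel
  congr 1
  congr 1
  field_simp

lemma hk_integrable (d : ℕ) {s : ℝ} (hs : 0 < s) : Integrable (heatKernel d s) := by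
  rw [hk_rw d hs]
  exact (integrable_gauss d (by positivity)).const_mul _

lemma hk_integral (d : ℕ) {s : ℝ} (hs : 0 < s) :
    ∫ x : EuclideanSpace ℝ (Fin d), heatKernel d s x = 1 := by
  rw [hk_rw d hs]
  rw [integral_const_mul, GaussianFourier.integral_rexp_neg_mul_sq_norm (by positivity),
    finrank_euclideanSpace_fin]
  have h1 : Real.pi / (1 / (4 * s)) = 4 * Real.pi * s := by field_simp
  rw [h1, ← Real.rpow_add (by positivity)]
  norm_num
  rw [neg_div, neg_add_cancel, Real.rpow_zero]

noncomputable def Fl (d : ℕ) (x : EuclideanSpace ℝ (Fin d)) : ENNReal :=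
  ∫⁻ s in Ioc (0:ℝ) 1, ENNReal.ofReal (heatKernel d s x)

lemma fOcc_eq (d : ℕ) (x : EuclideanSpace ℝ (Fin d)) : fOcc d x = (Fl d x).toReal := by
  rw [fOcc, intervalIntegral.integral_of_le zero_le_one, Fl]
  refine integral_eq_lintegral_of_nonneg_ae ?_ ?_
  · filter_upwards [ae_restrict_mem measurableSet_Ioc] with s hs
    exact hk_nonneg d hs.1.le x
  · exact ((measurable_hk d).comp (measurable_id.prodMk measurable_const)).aestronglyMeasurable

lemma measurable_Fl (d : ℕ) : Measurable (Fl d) := by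
  apply Measurable.lintegral_prod_right
  exact ((measurable_hk d).comp measurable_swap).ennreal_ofReal

lemma lintegral_Fl (d : ℕ) : ∫⁻ x : EuclideanSpace ℝ (Fin d), Fl d x = 1 := by
  unfold Fl
  rw [lintegral_lintegral_swap
    (((measurable_hk d).comp measurable_swap).ennreal_ofReal.aemeasurable)]
  have h : ∀ s ∈ Ioc (0:ℝ) 1,
      (∫⁻ x : EuclideanSpace ℝ (Fin d), ENNReal.ofReal (heatKernel d s x)) = 1 := by
    intro s hs
    rw [← ofReal_integral_eq_lintegral_ofReal (hk_integrable d hs.1)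
      (Filter.Eventually.of_forall fun x => hk_nonneg d hs.1.le x), hk_integral d hs.1]
    simp
  rw [setLIntegral_congr_fun measurableSet_Ioc h]
  simp [Real.volume_Ioc]

lemma fOcc_integrable (d : ℕ) : Integrable (fOcc d) := by
  have hm : AEStronglyMeasurable (fOcc d) volume := by
    have : fOcc d = fun x => (Fl d x).toReal := funext (fOcc_eq d)
    rw [this]
    exact (measurable_Fl d).ennreal_toReal.aestronglyMeasurable
  refine ⟨hm, ?_⟩
  rw [hasFiniteIntegral_iff_ofReal (Filter.Eventually.of_forall (fOcc_nonneg d))]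
  calc ∫⁻ x, ENNReal.ofReal (fOcc d x) ≤ ∫⁻ x, Fl d x := by
        refine lintegral_mono fun x => ?_
        rw [fOcc_eq d x]
        exact ENNReal.ofReal_toReal_le
    _ = 1 := lintegral_Fl d
    _ < ⊤ := ENNReal.one_lt_top

lemma fOcc_integral_le (d : ℕ) : ∫ x, fOcc d x ≤ 1 := by
  rw [integral_eq_lintegral_of_nonneg_ae (Filter.Eventually.of_forall (fOcc_nonneg d))
    (fOcc_integrable d).aestronglyMeasurable]
  have h : ∫⁻ x, ENNReal.ofReal (fOcc d x) ≤ 1 := by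
    calc ∫⁻ x, ENNReal.ofReal (fOcc d x) ≤ ∫⁻ x, Fl d x := by
          refine lintegral_mono fun x => ?_
          rw [fOcc_eq d x]
          exact ENNReal.ofReal_toReal_le
      _ = 1 := lintegral_Fl d
  calc (∫⁻ x, ENNReal.ofReal (fOcc d x)).toReal ≤ (1 : ENNReal).toReal :=
        ENNReal.toReal_mono ENNReal.one_ne_top h
    _ = 1 := by simp

lemma pow_le_exp' (n : ℕ) {u : ℝ} (hu : 0 ≤ u) : u ^ n / n.factorial ≤ rexp u := by
  refine le_trans ?_ (Real.sum_le_exp_of_nonneg hu (n + 1))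
  exact Finset.single_le_sum (f := fun i => u ^ i / i.factorial)
    (fun i _ => by positivity) (Finset.self_mem_range_succ n)

lemma exp_neg_le32 (d : ℕ) {u : ℝ} (hu : 0 < u) :
    rexp (-(u / 32)) ≤ 32 ^ d * d.factorial / u ^ d := by
  rw [Real.exp_neg]
  have h := pow_le_exp' d (u := u / 32) (by positivity)
  have h0 : (0:ℝ) < (u / 32) ^ d / d.factorial := by positivity
  have hud : (u:ℝ) ^ d ≠ 0 := by positivity
  calc (rexp (u / 32))⁻¹ ≤ ((u / 32) ^ d / d.factorial)⁻¹ := inv_anti₀ h0 h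
    _ = 32 ^ d * d.factorial / u ^ d := by
        rw [div_pow]
        field_simp

lemma texp_le (d : ℕ) {p t : ℝ} (hp : 0 ≤ p) (hpd : p ≤ 2 * d) (ht : 1 < t) :
    t ^ p * rexp (-t ^ 2 / 32) ≤ 32 ^ d * d.factorial := by
  have ht0 : (0:ℝ) < t := lt_trans one_pos ht
  have h1 : t ^ p ≤ (t ^ 2) ^ (d : ℕ) := by
    calc t ^ p ≤ t ^ (2 * (d:ℝ)) := Real.rpow_le_rpow_of_exponent_le ht.le hpd
      _ = (t ^ 2) ^ (d : ℕ) := by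
          rw [← Real.rpow_natCast (t ^ 2) d, ← Real.rpow_natCast t 2, ← Real.rpow_mul ht0.le]
          norm_num [mul_comm]
  have h2 : rexp (-t ^ 2 / 32) ≤ 32 ^ d * d.factorial / (t ^ 2) ^ (d : ℕ) := by
    have := exp_neg_le32 d (u := t ^ 2) (by positivity)
    rw [neg_div]
    exact this
  calc t ^ p * rexp (-t ^ 2 / 32) ≤ (t ^ 2) ^ (d:ℕ) * (32 ^ d * d.factorial / (t ^ 2) ^ (d:ℕ)) := by
        apply mul_le_mul h1 h2 (Real.exp_nonneg _) (by positivity)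
    _ = 32 ^ d * d.factorial := by field_simp

lemma fOcc_le (d : ℕ) {z : EuclideanSpace ℝ (Fin d)} (hz : 1 / 2 ≤ ‖z‖) :
    fOcc d z ≤ (32 ^ d * d.factorial : ℝ) * rexp (-‖z‖ ^ 2 / 8) := by
  set M : ℝ := 32 ^ d * d.factorial with hM
  have key : ∀ s ∈ Ioc (0:ℝ) 1, heatKernel d s z ≤ M * rexp (-‖z‖ ^ 2 / 8) := by
    rintro s ⟨hs0, hs1⟩
    have hzn : (0:ℝ) < ‖z‖ := lt_of_lt_of_le (by norm_num) hz
    have hz2 : (1:ℝ)/4 ≤ ‖z‖ ^ 2 := by nlinarith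
    have h1 : (4 * Real.pi * s) ^ (-(d:ℝ)/2) ≤ s ^ (-(d:ℝ)) := by
      calc (4 * Real.pi * s) ^ (-(d:ℝ)/2) ≤ s ^ (-(d:ℝ)/2) := by
            refine Real.rpow_le_rpow_of_nonpos hs0 ?_ ?_
            · nlinarith [Real.pi_gt_three]
            · have : (0:ℝ) ≤ (d:ℝ) := Nat.cast_nonneg d
              linarith
        _ ≤ s ^ (-(d:ℝ)) := by
            refine Real.rpow_le_rpow_of_exponent_ge hs0 hs1 ?_
            have : (0:ℝ) ≤ (d:ℝ) := Nat.cast_nonneg d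
            linarith
    have h2 : rexp (-‖z‖ ^ 2 / (4 * s)) ≤ rexp (-‖z‖ ^ 2 / 8) * rexp (-1 / (32 * s)) := by
      rw [← Real.exp_add]
      apply Real.exp_le_exp.2
      have hfac : (8:ℝ) * ‖z‖ ^ 2 - 4 * ‖z‖ ^ 2 * s - 1 ≥ 0 := by nlinarith
      have hkey : ‖z‖ ^ 2 / (4 * s) - ‖z‖ ^ 2 / 8 - 1 / (32 * s)
          = (8 * ‖z‖ ^ 2 - 4 * ‖z‖ ^ 2 * s - 1) / (32 * s) := by
        field_simp
        ring
      have hpos : (0:ℝ) ≤ (8 * ‖z‖ ^ 2 - 4 * ‖z‖ ^ 2 * s - 1) / (32 * s) :=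
        div_nonneg hfac (by positivity)
      rw [neg_div, neg_div, neg_div]
      linarith [hkey, hpos]
    have h3 : s ^ (-(d:ℝ)) * rexp (-1 / (32 * s)) ≤ M := by
      have hsd : s ^ (-(d:ℝ)) = (1/s) ^ (d:ℕ) := by
        rw [Real.rpow_neg hs0.le, Real.rpow_natCast s d]
        simp [one_div, inv_pow]
      set u : ℝ := 1/s with hu
      have hu0 : 0 < u := by positivity
      have he : (-1 : ℝ) / (32 * s) = -(u / 32) := by
        rw [hu]
        field_simp
      have h4 : rexp (-(u/32)) ≤ 32 ^ d * d.factorial / u ^ (d:ℕ) := exp_neg_le32 d hu0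
      rw [hsd, he]
      calc u ^ (d:ℕ) * rexp (-(u/32)) ≤ u ^ (d:ℕ) * (32 ^ d * d.factorial / u ^ (d:ℕ)) :=
            mul_le_mul_of_nonneg_left h4 (by positivity)
        _ = M := by field_simp; exact hM.symm
    calc heatKernel d s z ≤ s ^ (-(d:ℝ)) * (rexp (-‖z‖ ^ 2 / 8) * rexp (-1/(32*s))) := by
          unfold heatKernel
          exact mul_le_mul h1 h2 (Real.exp_nonneg _) (Real.rpow_nonneg hs0.le _)
      _ = (s ^ (-(d:ℝ)) * rexp (-1/(32*s))) * rexp (-‖z‖ ^ 2 / 8) := by ring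
      _ ≤ M * rexp (-‖z‖ ^ 2 / 8) :=
          mul_le_mul_of_nonneg_right h3 (Real.exp_nonneg _)
  rw [fOcc, intervalIntegral.integral_of_le zero_le_one]
  have hconst : IntegrableOn (fun _ : ℝ => M * rexp (-‖z‖ ^ 2 / 8)) (Ioc 0 1) := by
    exact integrableOn_const (by simp [Real.volume_Ioc]) enorm_ne_top
  calc (∫ s in Ioc (0:ℝ) 1, heatKernel d s z)
      ≤ ∫ _ in Ioc (0:ℝ) 1, M * rexp (-‖z‖ ^ 2 / 8) := by
        refine integral_mono_of_nonneg ?_ hconst ?_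
        · filter_upwards [ae_restrict_mem measurableSet_Ioc] with s hs
          exact hk_nonneg d hs.1.le z
        · filter_upwards [ae_restrict_mem measurableSet_Ioc] with s hs
          exact key s hs
    _ = M * rexp (-‖z‖ ^ 2 / 8) := by
        rw [setIntegral_const]
        simp [Real.volume_Ioc]

lemma shells_cover {E : Type*} [NormedAddCommGroup E] {x : E} (hx0 : x ≠ 0) (hx1 : ‖x‖ < 1) :
    ∃ n : ℕ, (1/2 : ℝ) ^ (n + 1) ≤ ‖x‖ ∧ ‖x‖ < (1/2 : ℝ) ^ n := by
  have hxpos : 0 < ‖x‖ := norm_pos_iff.2 hx0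
  have hex : ∃ k, (1/2 : ℝ) ^ k ≤ ‖x‖ := by
    obtain ⟨k, hk⟩ := exists_pow_lt_of_lt_one hxpos (by norm_num : (1/2 : ℝ) < 1)
    exact ⟨k, hk.le⟩
  classical
  have hk1 : (1/2 : ℝ) ^ (Nat.find hex) ≤ ‖x‖ := Nat.find_spec hex
  have hk0 : Nat.find hex ≠ 0 := by
    intro h
    rw [h] at hk1
    simp at hk1
    linarith
  refine ⟨Nat.find hex - 1, ?_, ?_⟩
  · have h : Nat.find hex - 1 + 1 = Nat.find hex := by omega
    rw [h]
    exact hk1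
  · exact lt_of_not_ge (Nat.find_min hex (Nat.sub_lt (Nat.pos_of_ne_zero hk0) one_pos))

lemma integrableOn_rpow_ball (d : ℕ) (hd : 0 < d) {γ : ℝ} (hγ : 0 ≤ γ) (hγd : γ < d) :
    IntegrableOn (fun x : EuclideanSpace ℝ (Fin d) => ‖x‖ ^ (-γ)) (ball 0 1) := by
  haveI : Nonempty (Fin d) := ⟨⟨0, hd⟩⟩
  haveI : Nontrivial (EuclideanSpace ℝ (Fin d)) := by
    have h : (0 : ℕ) < Module.finrank ℝ (EuclideanSpace ℝ (Fin d)) := by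
      rw [finrank_euclideanSpace_fin]; exact hd
    exact Module.nontrivial_of_finrank_pos h
  have hmeas : Measurable fun x : EuclideanSpace ℝ (Fin d) => ‖x‖ ^ (-γ) :=
    measurable_norm.pow_const _
  refine ⟨hmeas.aestronglyMeasurable.restrict, ?_⟩
  rw [hasFiniteIntegral_iff_ofReal
    (Filter.Eventually.of_forall fun x => Real.rpow_nonneg (norm_nonneg _) _)]
  set S : ℕ → Set (EuclideanSpace ℝ (Fin d)) :=
    fun n => ball 0 ((1/2 : ℝ) ^ n) \ ball 0 ((1/2 : ℝ) ^ (n + 1)) with hS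
  set B : ENNReal := volume (ball (0 : EuclideanSpace ℝ (Fin d)) 1) with hB
  have hBfin : B < ⊤ := measure_ball_lt_top
  have hsub : ball (0 : EuclideanSpace ℝ (Fin d)) 1 ⊆ {0} ∪ ⋃ n, S n := by
    intro x hx
    rcases eq_or_ne x 0 with rfl | hx0
    · exact Or.inl rfl
    refine Or.inr (mem_iUnion.2 ?_)
    obtain ⟨n, hn1, hn2⟩ := shells_cover hx0 (mem_ball_zero_iff.1 hx)
    exact ⟨n, mem_ball_zero_iff.2 hn2, fun h => absurd (mem_ball_zero_iff.1 h) (not_lt.2 hn1)⟩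
  have hSbound : ∀ n : ℕ, (∫⁻ x in S n, ENNReal.ofReal (‖x‖ ^ (-γ))) ≤
      ENNReal.ofReal (((1/2 : ℝ) ^ (n+1)) ^ (-γ)) * (ENNReal.ofReal (((1/2 : ℝ) ^ n) ^ d) * B) := by
    intro n
    have hstep : (∫⁻ x in S n, ENNReal.ofReal (‖x‖ ^ (-γ))) ≤
        (∫⁻ _ in S n, ENNReal.ofReal (((1/2 : ℝ) ^ (n+1)) ^ (-γ))) := by
      refine setLIntegral_mono measurable_const fun x hx => ?_
      refine ENNReal.ofReal_le_ofReal ?_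
      refine Real.rpow_le_rpow_of_nonpos (by positivity) ?_ (neg_nonpos.2 hγ)
      exact le_of_not_gt (fun h => hx.2 (mem_ball_zero_iff.2 h))
    refine le_trans hstep ?_
    rw [setLIntegral_const]
    refine mul_le_mul_right ?_ _
    calc volume (S n) ≤ volume (ball (0 : EuclideanSpace ℝ (Fin d)) ((1/2 : ℝ) ^ n)) :=
          measure_mono diff_subset
      _ = ENNReal.ofReal (((1/2 : ℝ) ^ n) ^ Module.finrank ℝ (EuclideanSpace ℝ (Fin d))) * B :=
          Measure.addHaar_ball volume 0 (by positivity)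
      _ = ENNReal.ofReal (((1/2 : ℝ) ^ n) ^ d) * B := by rw [finrank_euclideanSpace_fin]
  have hration : ∀ n : ℕ, (((1/2 : ℝ) ^ (n+1)) ^ (-γ)) * (((1/2 : ℝ) ^ n) ^ d)
      = 2 ^ γ * ((2 : ℝ) ^ (γ - d)) ^ n := by
    intro n
    have h12 : ∀ m : ℕ, ((1/2 : ℝ) ^ m) = (2 : ℝ) ^ (-(m : ℝ)) := by
      intro m
      rw [Real.rpow_neg (by norm_num), Real.rpow_natCast]
      simp [one_div, inv_pow]
    rw [h12 (n+1), h12 n, ← Real.rpow_mul (by norm_num), ← Real.rpow_natCast ((2:ℝ) ^ (-(n:ℝ))) d,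
      ← Real.rpow_mul (by norm_num), ← Real.rpow_add (by norm_num : (0:ℝ) < 2),
      ← Real.rpow_natCast ((2:ℝ) ^ (γ - (d:ℝ))) n, ← Real.rpow_mul (by norm_num),
      ← Real.rpow_add (by norm_num : (0:ℝ) < 2)]
    congr 1
    push_cast
    ring
  have hr : ENNReal.ofReal ((2:ℝ) ^ (γ - d)) < 1 := by
    rw [← ENNReal.ofReal_one]
    refine ENNReal.ofReal_lt_ofReal_iff_of_nonneg (by positivity) |>.2 ?_
    exact Real.rpow_lt_one_of_one_lt_of_neg (by norm_num) (by linarith)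
  calc (∫⁻ x in ball (0 : EuclideanSpace ℝ (Fin d)) 1, ENNReal.ofReal (‖x‖ ^ (-γ)))
      ≤ ∫⁻ x in {0} ∪ ⋃ n, S n, ENNReal.ofReal (‖x‖ ^ (-γ)) := lintegral_mono_set hsub
    _ ≤ (∫⁻ x in ({0} : Set (EuclideanSpace ℝ (Fin d))), ENNReal.ofReal (‖x‖ ^ (-γ)))
        + ∫⁻ x in ⋃ n, S n, ENNReal.ofReal (‖x‖ ^ (-γ)) := lintegral_union_le _ _ _
    _ ≤ 0 + ∑' n, ∫⁻ x in S n, ENNReal.ofReal (‖x‖ ^ (-γ)) := by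
        refine add_le_add ?_ (lintegral_iUnion_le _ _)
        rw [setLIntegral_measure_zero _ _ (measure_singleton 0)]
    _ ≤ ∑' n, ENNReal.ofReal (((1/2 : ℝ) ^ (n+1)) ^ (-γ)) * (ENNReal.ofReal (((1/2 : ℝ) ^ n) ^ d) * B) := by
        rw [zero_add]
        exact ENNReal.tsum_le_tsum hSbound
    _ = ∑' n, ENNReal.ofReal (2 ^ γ) * (ENNReal.ofReal ((2:ℝ) ^ (γ - d))) ^ n * B := by
        congr 1
        funext n
        rw [← mul_assoc, ← ENNReal.ofReal_mul (by positivity), hration n,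
          ENNReal.ofReal_mul (by positivity), ENNReal.ofReal_pow (by positivity)]
    _ = ENNReal.ofReal (2 ^ γ) * B * ∑' n, (ENNReal.ofReal ((2:ℝ) ^ (γ - d))) ^ n := by
        have h : ∀ n : ℕ, ENNReal.ofReal (2 ^ γ) * (ENNReal.ofReal ((2:ℝ) ^ (γ - d))) ^ n * B
            = (ENNReal.ofReal (2 ^ γ) * B) * (ENNReal.ofReal ((2:ℝ) ^ (γ - d))) ^ n := fun n => by
          ring
        rw [tsum_congr h, ENNReal.tsum_mul_left]
    _ < ⊤ := by
        rw [ENNReal.tsum_geometric]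
        refine ENNReal.mul_lt_top (ENNReal.mul_lt_top ENNReal.ofReal_lt_top hBfin) ?_
        rw [ENNReal.inv_lt_top, tsub_pos_iff_lt]
        exact hr

theorem stmt10 (d : ℕ) (hd : 3 ≤ d) (γ : ℝ) (hγ : 0 ≤ γ) (hγd : γ < d) :
    ∃ C : ℝ, ∀ y : EuclideanSpace ℝ (Fin d), 1 < ‖y‖ →
      ‖y‖ ^ γ * fGamma d γ y ≤ C := by
  have hd0 : 0 < d := by omega
  haveI : Nonempty (Fin d) := ⟨⟨0, hd0⟩⟩
  haveI : Nontrivial (EuclideanSpace ℝ (Fin d)) := by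
    have h : (0 : ℕ) < Module.finrank ℝ (EuclideanSpace ℝ (Fin d)) := by
      rw [finrank_euclideanSpace_fin]; exact hd0
    exact Module.nontrivial_of_finrank_pos h
  set M : ℝ := 32 ^ d * d.factorial with hM
  have hM0 : 0 < M := by positivity
  set K : ℝ := ∫ x in ball (0 : EuclideanSpace ℝ (Fin d)) 1, ‖x‖ ^ (-γ) with hK
  have hK0 : 0 ≤ K := setIntegral_nonneg measurableSet_ball
    (fun x _ => Real.rpow_nonneg (norm_nonneg _) _)
  set B : ℝ := (volume (ball (0 : EuclideanSpace ℝ (Fin d)) 1)).toReal with hB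
  have hB0 : 0 ≤ B := ENNReal.toReal_nonneg
  refine ⟨2 ^ γ + M * M * (K + B), fun y hy => ?_⟩
  have hy0 : (0:ℝ) < ‖y‖ := lt_trans one_pos hy
  set e : ℝ := rexp (-‖y‖ ^ 2 / 32) with he
  have he0 : 0 ≤ e := Real.exp_nonneg _
  set g1 : EuclideanSpace ℝ (Fin d) → ℝ :=
    fun x => 2 ^ γ * ‖y‖ ^ (-γ) * fOcc d (y - x) with hg1
  set g2 : EuclideanSpace ℝ (Fin d) → ℝ :=
    fun x => M * e * ((ball (0:EuclideanSpace ℝ (Fin d)) 1).indicator (fun x => ‖x‖ ^ (-γ)) x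
      + (ball (0:EuclideanSpace ℝ (Fin d)) (‖y‖/2)).indicator (fun _ => (1:ℝ)) x) with hg2
  have hind1 : Integrable ((ball (0:EuclideanSpace ℝ (Fin d)) 1).indicator
      (fun x => ‖x‖ ^ (-γ))) :=
    (integrableOn_rpow_ball d hd0 hγ hγd).integrable_indicator measurableSet_ball
  have hind2 : Integrable ((ball (0:EuclideanSpace ℝ (Fin d)) (‖y‖/2)).indicator
      (fun _ => (1:ℝ))) :=
    (integrableOn_const measure_ball_lt_top.ne).integrable_indicator measurableSet_ball
  have hI1 : Integrable g1 := ((fOcc_integrable d).comp_sub_left y).const_mul _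
  have hI2 : Integrable g2 := (hind1.add hind2).const_mul _
  have hpt : ∀ x, fOcc d (y - x) * ‖x‖ ^ (-γ) ≤ g1 x + g2 x := by
    intro x
    have hg1nn : 0 ≤ g1 x := by
      have := fOcc_nonneg d (y - x)
      have h2 : (0:ℝ) ≤ 2 ^ γ * ‖y‖ ^ (-γ) := by positivity
      simpa [hg1] using mul_nonneg h2 this
    have hindnn1 : 0 ≤ (ball (0:EuclideanSpace ℝ (Fin d)) 1).indicator
        (fun x => ‖x‖ ^ (-γ)) x :=
      Set.indicator_nonneg (fun z _ => Real.rpow_nonneg (norm_nonneg _) _) x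
    have hindnn2 : 0 ≤ (ball (0:EuclideanSpace ℝ (Fin d)) (‖y‖/2)).indicator
        (fun _ => (1:ℝ)) x :=
      Set.indicator_nonneg (fun z _ => zero_le_one) x
    have hg2nn : 0 ≤ g2 x := by
      have := add_nonneg hindnn1 hindnn2
      simpa [hg2] using mul_nonneg (mul_nonneg hM0.le he0) this
    rcases le_or_gt (‖y‖/2) ‖x‖ with hx | hx
    · have heq : (‖y‖/2 : ℝ) ^ (-γ) = 2 ^ γ * ‖y‖ ^ (-γ) := by
        rw [Real.div_rpow (norm_nonneg y) (by norm_num)]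
        rw [Real.rpow_neg (by norm_num : (0:ℝ) ≤ 2)]
        field_simp
      have h1 : ‖x‖ ^ (-γ) ≤ 2 ^ γ * ‖y‖ ^ (-γ) := by
        rw [← heq]
        exact Real.rpow_le_rpow_of_nonpos (by positivity) hx (neg_nonpos.2 hγ)
      have h2 : fOcc d (y - x) * ‖x‖ ^ (-γ) ≤ fOcc d (y - x) * (2 ^ γ * ‖y‖ ^ (-γ)) :=
        mul_le_mul_of_nonneg_left h1 (fOcc_nonneg d _)
      calc fOcc d (y - x) * ‖x‖ ^ (-γ) ≤ fOcc d (y - x) * (2 ^ γ * ‖y‖ ^ (-γ)) := h2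
        _ = g1 x := by rw [hg1]; ring
        _ ≤ g1 x + g2 x := le_add_of_nonneg_right hg2nn
    · have hyx : ‖y‖/2 ≤ ‖y - x‖ := by
        have h := norm_sub_norm_le y x
        linarith
      have h12 : (1:ℝ)/2 ≤ ‖y - x‖ := by linarith
      have hf : fOcc d (y - x) ≤ M * e := by
        refine le_trans (fOcc_le d h12) ?_
        refine mul_le_mul_of_nonneg_left ?_ hM0.le
        rw [he]
        apply Real.exp_le_exp.2
        have : ‖y‖^2 / 4 ≤ ‖y - x‖^2 := by nlinarith
        linarith [this]
      have hind : ‖x‖ ^ (-γ) ≤ (ball (0:EuclideanSpace ℝ (Fin d)) 1).indicator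
          (fun x => ‖x‖ ^ (-γ)) x
          + (ball (0:EuclideanSpace ℝ (Fin d)) (‖y‖/2)).indicator (fun _ => (1:ℝ)) x := by
        rcases lt_or_ge ‖x‖ 1 with h1 | h1
        · rw [Set.indicator_of_mem (mem_ball_zero_iff.2 h1)]
          exact le_add_of_nonneg_right hindnn2
        · have hle1 : ‖x‖ ^ (-γ) ≤ 1 :=
            Real.rpow_le_one_of_one_le_of_nonpos h1 (neg_nonpos.2 hγ)
          rw [Set.indicator_of_mem (mem_ball_zero_iff.2 hx)]
          exact le_add_of_nonneg_of_le hindnn1 hle1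
      calc fOcc d (y - x) * ‖x‖ ^ (-γ)
          ≤ (M * e) * ((ball (0:EuclideanSpace ℝ (Fin d)) 1).indicator
              (fun x => ‖x‖ ^ (-γ)) x
            + (ball (0:EuclideanSpace ℝ (Fin d)) (‖y‖/2)).indicator (fun _ => (1:ℝ)) x) :=
            mul_le_mul hf hind (Real.rpow_nonneg (norm_nonneg _) _)
              (mul_nonneg hM0.le he0)
        _ = g2 x := rfl
        _ ≤ g1 x + g2 x := le_add_of_nonneg_left hg1nn
  have hfg : fGamma d γ y ≤ ∫ x, (g1 x + g2 x) := by
    rw [fGamma]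
    refine integral_mono_of_nonneg ?_ (hI1.add hI2) (Filter.Eventually.of_forall hpt)
    exact Filter.Eventually.of_forall fun x =>
      mul_nonneg (fOcc_nonneg d _) (Real.rpow_nonneg (norm_nonneg _) _)
  have hval : ∫ x, (g1 x + g2 x)
      = 2 ^ γ * ‖y‖ ^ (-γ) * (∫ x, fOcc d x) + M * e * (K + (‖y‖/2)^d * B) := by
    rw [integral_add hI1 hI2]
    congr 1
    · rw [hg1]
      simp only
      rw [integral_const_mul, integral_sub_left_eq_self (fOcc d) volume y]
    · rw [hg2]
      simp only
      rw [integral_const_mul, integral_add hind1 hind2,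
        integral_indicator measurableSet_ball, integral_indicator measurableSet_ball]
      congr 2
      rw [setIntegral_const, measureReal_def]
      rw [Measure.addHaar_ball volume 0 (by positivity : (0:ℝ) ≤ ‖y‖/2),
        finrank_euclideanSpace_fin, ENNReal.toReal_mul,
        ENNReal.toReal_ofReal (by positivity)]
      simp [hB]
  have hyy : ‖y‖ ^ γ * ‖y‖ ^ (-γ) = 1 := by
    rw [← Real.rpow_add hy0, add_neg_cancel, Real.rpow_zero]
  have hT1 : ‖y‖ ^ γ * (2 ^ γ * ‖y‖ ^ (-γ) * (∫ x, fOcc d x)) ≤ 2 ^ γ := by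
    have heq : ‖y‖ ^ γ * (2 ^ γ * ‖y‖ ^ (-γ) * (∫ x, fOcc d x))
        = (‖y‖ ^ γ * ‖y‖ ^ (-γ)) * (2 ^ γ * (∫ x, fOcc d x)) := by ring
    rw [heq, hyy, one_mul]
    calc 2 ^ γ * (∫ x, fOcc d x) ≤ 2 ^ γ * 1 :=
          mul_le_mul_of_nonneg_left (fOcc_integral_le d) (by positivity)
      _ = 2 ^ γ := mul_one _
  have hT2 : ‖y‖ ^ γ * (M * e * (K + (‖y‖/2)^d * B)) ≤ M * M * (K + B) := by
    have b1 : ‖y‖ ^ γ * e ≤ M := texp_le d hγ (by push_cast; linarith) hy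
    have b2 : (‖y‖/2)^d * (‖y‖ ^ γ * e) ≤ M := by
      calc (‖y‖/2)^d * (‖y‖ ^ γ * e) ≤ ‖y‖^d * (‖y‖ ^ γ * e) := by
            refine mul_le_mul_of_nonneg_right ?_ (mul_nonneg (by positivity) he0)
            exact pow_le_pow_left₀ (by positivity) (by linarith) d
        _ = ‖y‖ ^ ((d:ℝ) + γ) * e := by
            rw [← Real.rpow_natCast ‖y‖ d, ← mul_assoc, ← Real.rpow_add hy0]
        _ ≤ M := texp_le d (by positivity) (by push_cast; linarith) hy
    calc ‖y‖ ^ γ * (M * e * (K + (‖y‖/2)^d * B))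
        = M * (K * (‖y‖ ^ γ * e) + B * ((‖y‖/2)^d * (‖y‖ ^ γ * e))) := by ring
      _ ≤ M * (K * M + B * M) := by
          refine mul_le_mul_of_nonneg_left ?_ hM0.le
          exact add_le_add (mul_le_mul_of_nonneg_left b1 hK0)
            (mul_le_mul_of_nonneg_left b2 hB0)
      _ = M * M * (K + B) := by ring
  calc ‖y‖ ^ γ * fGamma d γ y ≤ ‖y‖ ^ γ * ∫ x, (g1 x + g2 x) :=
        mul_le_mul_of_nonneg_left hfg (Real.rpow_nonneg (norm_nonneg _) _)
    _ = ‖y‖ ^ γ * (2 ^ γ * ‖y‖ ^ (-γ) * (∫ x, fOcc d x))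
        + ‖y‖ ^ γ * (M * e * (K + (‖y‖/2)^d * B)) := by rw [hval]; ring
    _ ≤ 2 ^ γ + M * M * (K + B) := add_le_add hT1 hT2
end
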